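/- Box parametrization: let Q = (q₁ > q₂ > ... > q_k) be super-distinct, and set δ₁ = q_k and δ_i = q_{k−i+1} − q_{k−i+2} − 1 for 2 ≤ i ≤ k. Then the partitions P with Des(P) = Q are exactly those whose Burge code equals a^{δ₁−i₁} b^{i₁} a^{δ₂−i₂+1} b^{i₂} ⋯ a^{δ_k−i_k+1} b^{i_k} a for some (i₁,...,i_k) ∈ [1,δ₁] × ⋯ × [1,δ_k]; moreover the partition with code indexed by (i₁,...,i_k) has exactly i₁ + ⋯ + i_k parts. In particular |Des⁻¹(Q)| = δ₁δ₂⋯δ_k. -/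

import Mathlib

open scoped Classical

noncomputable section

/-- `f` is a frequency sequence: `f 0 = 0` and finite support. -/
def IsFreq (f : ℕ → ℕ) : Prop := f 0 = 0 ∧ (Function.support f).Finite

/-- size `|f| = ∑ i·f i`. -/
def fsize (f : ℕ → ℕ) : ℕ := ∑ᶠ n, n * f n

/-- length `ℓ(f) = ∑ f i`. -/
def flen (f : ℕ → ℕ) : ℕ := ∑ᶠ n, f n

/-- the support `S(f)`. -/
def suppF (f : ℕ → ℕ) : Set ℕ := {i | 1 ≤ i ∧ f i ≠ 0}

/-- `[i,j]` is a spread of `f`: a maximal interval contained in the support. -/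
def IsSpread (f : ℕ → ℕ) (i j : ℕ) : Prop :=
  1 ≤ i ∧ i ≤ j ∧ (∀ k, i ≤ k → k ≤ j → f k ≠ 0) ∧ (i = 1 ∨ f (i - 1) = 0) ∧ f (j + 1) = 0

/-- `L(f)`: every other element of each spread, starting from the left end. -/
def Lset (f : ℕ → ℕ) : Set ℕ :=
  {q | ∃ i j, IsSpread f i j ∧ i ≤ q ∧ q ≤ j ∧ (q - i) % 2 = 0}

/-- `R(f)`: every other element of each spread, starting from the right end. -/
def Rset (f : ℕ → ℕ) : Set ℕ :=
  {q | ∃ i j, IsSpread f i j ∧ i ≤ q ∧ q ≤ j ∧ (j - q) % 2 = 0}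

/-- the 2-measure, as the cardinality of `R(f)`. -/
def mu2 (f : ℕ → ℕ) : ℕ := (Rset f).ncard

/-- The Burge demotion operator `∂`. -/
def dB (f : ℕ → ℕ) : ℕ → ℕ := fun n =>
  if n = 0 then 0
  else f n - (if n ∈ Rset f then 1 else 0) + (if n + 1 ∈ Rset f then 1 else 0)

/-- The promotion operator `α`. -/
def aB (f : ℕ → ℕ) : ℕ → ℕ := fun n =>
  if n = 0 then 0
  else f n - (if n ∈ Lset f then 1 else 0) + (if n - 1 ∈ Lset f then 1 else 0)

/-- the shift `(f₂, f₃, …)`; on partitions this is `P ↦ P - 1`. -/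
def tailF (f : ℕ → ℕ) : ℕ → ℕ := fun n => if n = 0 then 0 else f (n + 1)

/-- The operator `β`: `β(f) = (f₁ + 1, α(f₂, f₃, …))`. -/
def bB (f : ℕ → ℕ) : ℕ → ℕ := fun n =>
  if n = 0 then 0 else if n = 1 then f 1 + 1 else aB (tailF f) (n - 1)

/-- the zero sequence (empty partition). -/
def zeroF : ℕ → ℕ := fun _ => 0

/-- `k` minimal with `∂^[k] f = 0`. -/
def chainK (f : ℕ → ℕ) : ℕ :=
  if h : ∃ m, dB^[m] f = zeroF then Nat.find h else 0

/-- The Burge code of `f`, as a list of letters; `false` = `a`, `true` = `b`.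
The `i`-th letter (0-indexed `i`) records whether `∂^[i] f ∈ B`, i.e. `1 ∈ R(∂^[i] f)`. -/
def burgeCode (f : ℕ → ℕ) : List Bool :=
  (List.range (chainK f + 1)).map fun i => if 1 ∈ Rset (dB^[i] f) then true else false

/-- descent set of a word: 1-indexed positions `i` with `ωᵢ = b`, `ω_{i+1} = a`. -/
def descSet (w : List Bool) : Set ℕ :=
  {i | 1 ≤ i ∧ w[i - 1]? = some true ∧ w[i]? = some false}

/-- the descent set of (the Burge code of) a partition. -/
def DesSet (f : ℕ → ℕ) : Set ℕ := descSet (burgeCode f)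

/-- `Des(P)` regarded as a partition, via its frequency sequence. -/
def desFreq (f : ℕ → ℕ) : ℕ → ℕ := fun i => if i ∈ DesSet f then 1 else 0

/-- the 2-measure as the maximal size of a subset of the support without
consecutive pairs. -/
def twoMeasure (f : ℕ → ℕ) : ℕ :=
  sSup {n | ∃ T : Finset ℕ, (↑T : Set ℕ) ⊆ suppF f ∧ (∀ x ∈ T, x + 1 ∉ T) ∧ T.card = n}

/-- evaluation at `i`: `ν_i(f) = i f_i + (i+1) f_{i+1} + 2 ∑_{j>i+1} f_j`, with `ν₀ = ν₁`. -/
def nuI (f : ℕ → ℕ) (i : ℕ) : ℕ :=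
  (max i 1) * f (max i 1) + (max i 1 + 1) * f (max i 1 + 1)
    + 2 * ∑ᶠ j ∈ {j : ℕ | max i 1 + 1 < j}, f j

/-- annihilation at `i`: `ρ_i(f) = (f₁, …, f_{i-1}, f_{i+2}, f_{i+3}, …)`, with `ρ₀ = ρ₁`. -/
def rhoI (f : ℕ → ℕ) (i : ℕ) : ℕ → ℕ := fun n =>
  if n = 0 then 0 else if n < max i 1 then f n else f (n + 2)

/-- `i ≥ 1` is right admissible in `f`. -/
def RightAdm (f : ℕ → ℕ) (i : ℕ) : Prop :=
  1 ≤ i ∧ 0 < f i ∧ (0 < f (i + 1) ∨ (f (i - 1) = 0 ∧ f (i + 1) = 0))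

/-- `i ≥ 0` is left admissible in `f`. -/
def LeftAdm (f : ℕ → ℕ) (i : ℕ) : Prop :=
  0 < f (i + 1) ∧ (0 < f i ∨ (f i = 0 ∧ f (i + 2) = 0))

/-- `i` is a maximal index for `f`: `ν_i(f)` is nonzero and maximal. -/
def MaxIdx (f : ℕ → ℕ) (i : ℕ) : Prop :=
  nuI f i ≠ 0 ∧ ∀ j, nuI f j ≤ nuI f i

end

/-- the word `a^{δ₁-i₁} b^{i₁} a^{δ₂-i₂+1} b^{i₂} ⋯ a^{δ_k-i_k+1} b^{i_k} a`. -/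
def boxWord (k : ℕ) (δ : ℕ → ℕ) (i : ℕ → ℕ) : List Bool :=
  List.replicate (δ 1 - i 1) false ++ List.replicate (i 1) true ++
    ((List.range (k - 1)).map (fun t =>
      List.replicate (δ (t + 2) - i (t + 2) + 1) false ++
        List.replicate (i (t + 2)) true)).flatten ++ [false]


section SpreadBasics

/-- bounded support, convenient form -/
def BddF (f : ℕ → ℕ) : Prop := ∃ N, ∀ n, N ≤ n → f n = 0

lemma IsFreq.bdd {f : ℕ → ℕ} (hf : IsFreq f) : BddF f := by
  obtain ⟨N, hN⟩ := hf.2.bddAbove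
  refine ⟨N + 1, fun n hn => ?_⟩
  by_contra h
  have := hN (Function.mem_support.2 h)
  omega

lemma isFreq_of_bdd {f : ℕ → ℕ} (h0 : f 0 = 0) (hb : BddF f) : IsFreq f := by
  obtain ⟨N, hN⟩ := hb
  refine ⟨h0, (Set.finite_Iio N).subset ?_⟩
  intro n hn
  simp only [Set.mem_Iio]
  by_contra h
  exact hn (hN n (by omega))

lemma spread_unique {f : ℕ → ℕ} {i j i' j' q : ℕ} (h : IsSpread f i j)
    (h' : IsSpread f i' j') (hq : i ≤ q) (hq2 : q ≤ j) (hq' : i' ≤ q) (hq2' : q ≤ j') :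
    i = i' ∧ j = j' := by
  obtain ⟨hi1, hij, hnz, hl, hr⟩ := h
  obtain ⟨hi1', hij', hnz', hl', hr'⟩ := h'
  constructor
  · by_contra hne
    rcases Nat.lt_or_ge i i' with hlt | hge
    · have h2 : f (i' - 1) ≠ 0 := hnz _ (by omega) (by omega)
      rcases hl' with h1 | h1
      · omega
      · exact h2 h1
    · have hlt : i' < i := by omega
      have h2 : f (i - 1) ≠ 0 := hnz' _ (by omega) (by omega)
      rcases hl with h1 | h1
      · omega
      · exact h2 h1
  · by_contra hne
    rcases Nat.lt_or_ge j j' with hlt | hge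
    · exact hnz' _ (by omega) (by omega) hr
    · exact hnz _ (by omega) (by omega) hr'

lemma exists_spread {f : ℕ → ℕ} (hb : BddF f) {q : ℕ} (hq1 : 1 ≤ q) (hq : f q ≠ 0) :
    ∃ i j, IsSpread f i j ∧ i ≤ q ∧ q ≤ j := by
  classical
  obtain ⟨N, hN⟩ := hb
  have hj : ∃ j, q ≤ j ∧ f (j + 1) = 0 := ⟨q + N, by omega, hN _ (by omega)⟩
  have hjP := Nat.find_spec hj
  set j := Nat.find hj with hjdef
  have hrun : ∀ t, q ≤ t → t ≤ j → f t ≠ 0 := by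
    intro t hqt htj hft0
    rcases Nat.eq_or_lt_of_le hqt with rfl | hlt
    · exact hq hft0
    · have hmin := Nat.find_min hj (m := t - 1) (by omega)
      have : t - 1 + 1 = t := by omega
      rw [this] at hmin
      exact hmin ⟨by omega, hft0⟩
  have hi : ∃ d, q - d = 1 ∨ f (q - d - 1) = 0 := ⟨q - 1, Or.inl (by omega)⟩
  have hiP := Nat.find_spec hi
  set d := Nat.find hi with hidef
  have hd : d ≤ q - 1 := Nat.find_min' hi (Or.inl (by omega))
  refine ⟨q - d, j, ⟨by omega, by omega, ?_, ?_, hjP.2⟩, by omega, hjP.1⟩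
  · intro t hqd htj
    rcases le_or_gt q t with hle | hlt
    · exact hrun t hle htj
    · have hmin := Nat.find_min hi (m := q - t - 1) (by omega)
      push_neg at hmin
      have : q - (q - t - 1) - 1 = t := by omega
      rw [this] at hmin
      exact hmin.2
  · rcases hiP with h1 | h1
    · exact Or.inl (by omega)
    · exact Or.inr h1

lemma Rset_mem {f : ℕ → ℕ} {q : ℕ} (h : q ∈ Rset f) : 1 ≤ q ∧ f q ≠ 0 := by
  obtain ⟨i, j, hs, hiq, hqj, _⟩ := h
  exact ⟨le_trans hs.1 hiq, hs.2.2.1 q hiq hqj⟩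

lemma Lset_mem {f : ℕ → ℕ} {q : ℕ} (h : q ∈ Lset f) : 1 ≤ q ∧ f q ≠ 0 := by
  obtain ⟨i, j, hs, hiq, hqj, _⟩ := h
  exact ⟨le_trans hs.1 hiq, hs.2.2.1 q hiq hqj⟩

lemma notR_succ {f : ℕ → ℕ} {q : ℕ} (h : q ∈ Rset f) : q + 1 ∉ Rset f := by
  obtain ⟨i, j, hs, hiq, hqj, hpar⟩ := h
  rintro ⟨i', j', hs', hiq', hqj', hpar'⟩
  have hle : q + 1 ≤ j := by
    rcases Nat.lt_or_ge j (q + 1) with hlt | hge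
    · have hqq : q + 1 = j + 1 := by omega
      exact absurd (hs'.2.2.1 _ hiq' hqj') (by rw [hqq]; simp [hs.2.2.2.2])
    · exact hge
  obtain ⟨hi, hj⟩ := spread_unique hs hs' (q := q + 1) (by omega) hle hiq' hqj'
  omega

lemma notL_succ {f : ℕ → ℕ} {q : ℕ} (h : q ∈ Lset f) : q + 1 ∉ Lset f := by
  obtain ⟨i, j, hs, hiq, hqj, hpar⟩ := h
  rintro ⟨i', j', hs', hiq', hqj', hpar'⟩
  have hle : q + 1 ≤ j := by
    rcases Nat.lt_or_ge j (q + 1) with hlt | hge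
    · have hqq : q + 1 = j + 1 := by omega
      exact absurd (hs'.2.2.1 _ hiq' hqj') (by rw [hqq]; simp [hs.2.2.2.2])
    · exact hge
  obtain ⟨hi, hj⟩ := spread_unique hs hs' (q := q + 1) (by omega) hle hiq' hqj'
  omega

lemma coverR {f : ℕ → ℕ} (hb : BddF f) {q : ℕ} (hq1 : 1 ≤ q) (hq : f q ≠ 0) :
    q ∈ Rset f ∨ q + 1 ∈ Rset f := by
  obtain ⟨i, j, hs, hiq, hqj⟩ := exists_spread hb hq1 hq
  rcases Nat.mod_two_eq_zero_or_one (j - q) with he | ho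
  · exact Or.inl ⟨i, j, hs, hiq, hqj, he⟩
  · exact Or.inr ⟨i, j, hs, by omega, by omega, by omega⟩

lemma coverL {f : ℕ → ℕ} (hb : BddF f) {q : ℕ} (hq1 : 1 ≤ q) (hq : f q ≠ 0) :
    q ∈ Lset f ∨ (2 ≤ q ∧ q - 1 ∈ Lset f) := by
  obtain ⟨i, j, hs, hiq, hqj⟩ := exists_spread hb hq1 hq
  have hi1 : 1 ≤ i := hs.1
  rcases Nat.mod_two_eq_zero_or_one (q - i) with he | ho
  · exact Or.inl ⟨i, j, hs, hiq, hqj, he⟩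
  · exact Or.inr ⟨by omega, ⟨i, j, hs, by omega, by omega, by omega⟩⟩

lemma mem_R_rec {f : ℕ → ℕ} (hb : BddF f) {q : ℕ} (hq1 : 1 ≤ q) :
    q ∈ Rset f ↔ f q ≠ 0 ∧ (f (q + 1) = 0 ∨ q + 1 ∉ Rset f) := by
  constructor
  · intro h
    exact ⟨(Rset_mem h).2, Or.inr (notR_succ h)⟩
  · rintro ⟨hne, hor⟩
    obtain ⟨i, j, hs, hiq, hqj⟩ := exists_spread hb hq1 hne
    rcases hor with h0 | hnR
    · have hjq : j = q := by
        by_contra hne2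
        exact (hs.2.2.1 (q + 1) (by omega) (by omega)) h0
      exact ⟨i, j, hs, hiq, hqj, by omega⟩
    · rcases Nat.mod_two_eq_zero_or_one (j - q) with he | ho
      · exact ⟨i, j, hs, hiq, hqj, he⟩
      · exact absurd ⟨i, j, hs, by omega, by omega, by omega⟩ hnR

lemma mem_L_rec {f : ℕ → ℕ} (hb : BddF f) {q : ℕ} (hq1 : 1 ≤ q) :
    q ∈ Lset f ↔ f q ≠ 0 ∧ (q = 1 ∨ f (q - 1) = 0 ∨ q - 1 ∉ Lset f) := by
  constructor
  · intro h
    refine ⟨(Lset_mem h).2, ?_⟩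
    by_cases h1 : q = 1
    · exact Or.inl h1
    by_cases h2 : f (q - 1) = 0
    · exact Or.inr (Or.inl h2)
    refine Or.inr (Or.inr ?_)
    intro h3
    have h4 := notL_succ h3
    rw [show q - 1 + 1 = q from by omega] at h4
    exact h4 h
  · rintro ⟨hne, hor⟩
    obtain ⟨i, j, hs, hiq, hqj⟩ := exists_spread hb hq1 hne
    have hi1 : 1 ≤ i := hs.1
    rcases Nat.mod_two_eq_zero_or_one (q - i) with he | ho
    · exact ⟨i, j, hs, hiq, hqj, he⟩
    · exfalso
      have hq1' : q - 1 ∈ Lset f := ⟨i, j, hs, by omega, by omega, by omega⟩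
      rcases hor with h1 | h2 | h3
      · omega
      · exact (hs.2.2.1 (q - 1) (by omega) (by omega)) h2
      · exact h3 hq1'

end SpreadBasics
section Operators

lemma bdd_dB {f : ℕ → ℕ} (hb : BddF f) : BddF (dB f) := by
  obtain ⟨N, hN⟩ := hb
  refine ⟨N + 1, fun n hn => ?_⟩
  have h1 : n ∉ Rset f := fun h => (Rset_mem h).2 (hN n (by omega))
  have h2 : n + 1 ∉ Rset f := fun h => (Rset_mem h).2 (hN (n + 1) (by omega))
  have hn0 : n ≠ 0 := by omega
  simp [dB, hn0, h1, h2, hN n (by omega)]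

lemma bdd_aB {f : ℕ → ℕ} (hb : BddF f) : BddF (aB f) := by
  obtain ⟨N, hN⟩ := hb
  refine ⟨N + 2, fun n hn => ?_⟩
  have h1 : n ∉ Lset f := fun h => (Lset_mem h).2 (hN n (by omega))
  have h2 : n - 1 ∉ Lset f := fun h => (Lset_mem h).2 (hN (n - 1) (by omega))
  have hn0 : n ≠ 0 := by omega
  simp [aB, hn0, h1, h2, hN n (by omega)]

lemma bdd_tailF {f : ℕ → ℕ} (hb : BddF f) : BddF (tailF f) := by
  obtain ⟨N, hN⟩ := hb
  exact ⟨N + 1, fun n hn => by simp [tailF, show n ≠ 0 by omega, hN (n + 1) (by omega)]⟩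

lemma bdd_bB {f : ℕ → ℕ} (hb : BddF f) : BddF (bB f) := by
  obtain ⟨N, hN⟩ := bdd_aB (bdd_tailF hb)
  exact ⟨N + 2, fun n hn => by simp [bB, show n ≠ 0 by omega, show n ≠ 1 by omega,
    hN (n - 1) (by omega)]⟩

lemma Rset_zeroF : Rset zeroF = ∅ := by
  ext q; simp only [Set.mem_empty_iff_false, iff_false]
  intro h; exact (Rset_mem h).2 rfl

lemma Lset_zeroF : Lset zeroF = ∅ := by
  ext q; simp only [Set.mem_empty_iff_false, iff_false]
  intro h; exact (Lset_mem h).2 rfl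

lemma dB_zeroF : dB zeroF = zeroF := by
  funext n; simp [dB, Rset_zeroF, zeroF]

lemma aB_zeroF : aB zeroF = zeroF := by
  funext n; simp [aB, Lset_zeroF, zeroF]

lemma bB_val {g : ℕ → ℕ} {m : ℕ} (hm : 2 ≤ m) : bB g m = aB (tailF g) (m - 1) := by
  simp [bB, show m ≠ 0 by omega, show m ≠ 1 by omega]

/-- C1 : `R(α g) = L(g) + 1`. -/
lemma R_aB {g : ℕ → ℕ} (hb : BddF g) (q : ℕ) :
    q ∈ Rset (aB g) ↔ 2 ≤ q ∧ q - 1 ∈ Lset g := by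
  obtain ⟨N, hN⟩ := hb
  have hb' : BddF g := ⟨N, hN⟩
  have hbA : BddF (aB g) := bdd_aB hb'
  suffices H : ∀ d q', N + 2 ≤ q' + d → (q' ∈ Rset (aB g) ↔ 2 ≤ q' ∧ q' - 1 ∈ Lset g) from
    H (N + 2) q (by omega)
  intro d
  induction d with
  | zero =>
    intro q' hq'
    constructor
    · intro h
      exfalso
      apply (Rset_mem h).2
      have hn0 : q' ≠ 0 := by have := (Rset_mem h).1; omega
      have h1 : q' ∉ Lset g := fun hh => (Lset_mem hh).2 (hN q' (by omega))
      have h2 : q' - 1 ∉ Lset g := fun hh => (Lset_mem hh).2 (hN (q' - 1) (by omega))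
      simp [aB, hn0, h1, h2, hN q' (by omega)]
    · rintro ⟨h2, h1⟩
      exact absurd (hN (q' - 1) (by omega)) (Lset_mem h1).2
  | succ d ih =>
    intro q' hq'
    by_cases hq0 : q' = 0
    · subst hq0
      constructor
      · intro h; have := (Rset_mem h).1; omega
      · rintro ⟨h2, _⟩; omega
    have hq1 : 1 ≤ q' := by omega
    rw [mem_R_rec hbA hq1]
    have IH := ih (q' + 1) (by omega)
    constructor
    · rintro ⟨hne, hor⟩
      by_cases hA : q' - 1 ∈ Lset g
      · exact ⟨by have := (Lset_mem hA).1; omega, hA⟩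
      exfalso
      by_cases hB : q' ∈ Lset g
      · have hq1R : q' + 1 ∈ Rset (aB g) := IH.2 ⟨by omega, by simpa using hB⟩
        rcases hor with h0 | h0
        · have hBs : q' + 1 ∉ Lset g := notL_succ hB
          simp [aB, hBs, hB] at h0
        · exact h0 hq1R
      · have hgq : g q' ≠ 0 := by
          intro h0
          exact hne (by simp [aB, hq0, hA, hB, h0])
        rcases coverL hb' hq1 hgq with h | h
        · exact hB h
        · exact hA h.2
    · rintro ⟨h2, hA⟩
      have hB : q' ∉ Lset g := by
        have h4 := notL_succ hA
        rwa [show q' - 1 + 1 = q' from by omega] at h4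
      refine ⟨by simp [aB, hq0, hA, hB], Or.inr ?_⟩
      intro hc
      exact hB (by simpa using (IH.1 hc).2)

/-- C2 : `R(β g) = {1} ∪ (L(tail g) + 2)`. -/
lemma R_bB {g : ℕ → ℕ} (hb : BddF g) (q : ℕ) :
    q ∈ Rset (bB g) ↔ (q = 1 ∨ (3 ≤ q ∧ q - 2 ∈ Lset (tailF g))) := by
  obtain ⟨N2, hN2⟩ := bdd_tailF hb
  obtain ⟨N1, hN1⟩ := bdd_bB hb
  have hbh : BddF (tailF g) := ⟨N2, hN2⟩
  have hbB : BddF (bB g) := ⟨N1, hN1⟩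
  suffices H : ∀ d q', N1 + N2 + 3 ≤ q' + d →
      (q' ∈ Rset (bB g) ↔ (q' = 1 ∨ (3 ≤ q' ∧ q' - 2 ∈ Lset (tailF g)))) from
    H (N1 + N2 + 3) q (by omega)
  intro d
  induction d with
  | zero =>
    intro q' hq'
    constructor
    · intro h
      exact absurd (hN1 q' (by omega)) (Rset_mem h).2
    · rintro (h1 | ⟨h3, hA⟩)
      · omega
      · exact absurd (hN2 (q' - 2) (by omega)) (Lset_mem hA).2
  | succ d ih =>
    intro q' hq'
    by_cases hq0 : q' = 0
    · subst hq0
      constructor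
      · intro h; have := (Rset_mem h).1; omega
      · rintro (h1 | ⟨h3, _⟩) <;> omega
    have hq1 : 1 ≤ q' := by omega
    rw [mem_R_rec hbB hq1]
    have IH := ih (q' + 1) (by omega)
    by_cases hqone : q' = 1
    · subst hqone
      constructor
      · intro _; exact Or.inl rfl
      · intro _
        refine ⟨by simp [bB], Or.inr ?_⟩
        intro hc
        rcases IH.1 hc with hx | hx
        · omega
        · rcases hx with ⟨hx3, _⟩; omega
    have hq2 : 2 ≤ q' := by omega
    constructor
    · rintro ⟨hne, hor⟩
      by_cases hA : q' - 2 ∈ Lset (tailF g)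
      · exact Or.inr ⟨by have := (Lset_mem hA).1; omega, hA⟩
      exfalso
      by_cases hB : q' - 1 ∈ Lset (tailF g)
      · have hq1R : q' + 1 ∈ Rset (bB g) :=
          IH.2 (Or.inr ⟨by omega, by simpa [show q' + 1 - 2 = q' - 1 from by omega] using hB⟩)
        rcases hor with h0 | h0
        · rw [bB_val (by omega)] at h0
          have hq0' : q' ≠ 0 := by omega
          by_cases hC : q' ∈ Lset (tailF g)
          · have hgq := (Lset_mem hC).2
            simp only [show q' + 1 - 1 = q' from rfl] at h0
            simp [aB, hq0', hC, hB] at h0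
          · simp only [show q' + 1 - 1 = q' from rfl] at h0
            simp [aB, hq0', hC, hB] at h0
        · exact h0 hq1R
      · have hgq : tailF g (q' - 1) ≠ 0 := by
          intro hh
          apply hne
          rw [bB_val hq2]
          simp [aB, show q' - 1 ≠ 0 from by omega, hB,
            show q' - 1 - 1 = q' - 2 from by omega, hA, hh]
        rcases coverL hbh (by omega : 1 ≤ q' - 1) hgq with hcc | hcc
        · exact hB hcc
        · exact hA (by simpa [show q' - 1 - 1 = q' - 2 from by omega] using hcc.2)
    · rintro (h1 | ⟨h3, hA⟩)
      · omega
      · have hB : q' - 1 ∉ Lset (tailF g) := by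
          have h4 := notL_succ hA
          rwa [show q' - 2 + 1 = q' - 1 from by omega] at h4
        refine ⟨?_, Or.inr ?_⟩
        · rw [bB_val hq2]
          simp [aB, show q' - 1 ≠ 0 from by omega, hB,
            show q' - 1 - 1 = q' - 2 from by omega, hA]
        · intro hc
          rcases IH.1 hc with hx | hx
          · omega
          · exact hB (by simpa [show q' + 1 - 2 = q' - 1 from by omega] using hx.2)

/-- C3 : when `1 ∉ R f`, `L(∂ f) = R(f) - 1`. -/
lemma L_dB {f : ℕ → ℕ} (hb : BddF f) (h1 : 1 ∉ Rset f) (n : ℕ) :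
    n ∈ Lset (dB f) ↔ n + 1 ∈ Rset f := by
  have hbd : BddF (dB f) := bdd_dB hb
  induction n using Nat.strong_induction_on with
  | _ n ih =>
  by_cases hn0 : n = 0
  · subst hn0
    constructor
    · intro h; exact absurd (Lset_mem h).1 (by omega)
    · intro h; exact absurd h h1
  have hn1 : 1 ≤ n := by omega
  rw [mem_L_rec hbd hn1]
  by_cases hA : n + 1 ∈ Rset f
  · have hnR : n ∉ Rset f := fun hh => notR_succ hh hA
    refine Iff.intro (fun _ => hA) (fun _ => ⟨by simp [dB, hn0, hnR, hA], ?_⟩)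
    by_cases hne1 : n = 1
    · exact Or.inl hne1
    · refine Or.inr (Or.inr ?_)
      intro hc
      exact hnR (by simpa [show n - 1 + 1 = n from by omega] using (ih (n - 1) (by omega)).1 hc)
  · refine Iff.intro ?_ (fun hc => absurd hc hA)
    rintro ⟨hne, hor⟩
    exfalso
    by_cases hR : n ∈ Rset f
    · have hne1 : n ≠ 1 := fun e => h1 (e ▸ hR)
      have hn2 : 2 ≤ n := by omega
      have hRm : n - 1 ∉ Rset f := fun hh => by
        have h5 := notR_succ hh
        rw [show n - 1 + 1 = n from by omega] at h5
        exact h5 hR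
      rcases hor with he | he | he
      · omega
      · simp [dB, show n - 1 ≠ 0 from by omega, hRm, show n - 1 + 1 = n from by omega, hR] at he
      · exact he ((ih (n - 1) (by omega)).2 (by rwa [show n - 1 + 1 = n from by omega]))
    · have hfn : f n ≠ 0 := by
        intro h0
        exact hne (by simp [dB, hn0, hR, hA, h0])
      rcases coverR hb hn1 hfn with hc | hc
      · exact hR hc
      · exact hA hc

/-- C4 : when `1 ∈ R f`, `L(tail (∂ f)) = (R(f) ∖ {1}) - 2`. -/
lemma L_tail_dB {f : ℕ → ℕ} (hb : BddF f) (h1 : 1 ∈ Rset f) (n : ℕ) :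
    n ∈ Lset (tailF (dB f)) ↔ n + 2 ∈ Rset f := by
  have hbd : BddF (dB f) := bdd_dB hb
  have hbG : BddF (tailF (dB f)) := bdd_tailF hbd
  induction n using Nat.strong_induction_on with
  | _ n ih =>
  by_cases hn0 : n = 0
  · subst hn0
    constructor
    · intro h; exact absurd (Lset_mem h).1 (by omega)
    · intro h; exact absurd h (by simpa using notR_succ h1)
  have hn1 : 1 ≤ n := by omega
  rw [mem_L_rec hbG hn1]
  by_cases hA : n + 2 ∈ Rset f
  · have hB : n + 1 ∉ Rset f := fun hh => notR_succ hh hA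
    refine Iff.intro (fun _ => hA) (fun _ => ⟨by simp [tailF, dB, hn0, hB, hA], ?_⟩)
    by_cases hne1 : n = 1
    · exact Or.inl hne1
    · refine Or.inr (Or.inr ?_)
      intro hc
      exact hB (by simpa [show n - 1 + 2 = n + 1 from by omega] using (ih (n - 1) (by omega)).1 hc)
  · refine Iff.intro ?_ (fun hc => absurd hc hA)
    rintro ⟨hne, hor⟩
    exfalso
    by_cases hB : n + 1 ∈ Rset f
    · have hne1 : n ≠ 1 := fun e => by
        subst e; exact notR_succ h1 (by simpa using hB)
      have hn2 : 2 ≤ n := by omega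
      have hnR : n ∉ Rset f := fun hh => notR_succ hh hB
      rcases hor with he | he | he
      · omega
      · simp [tailF, dB, show n - 1 ≠ 0 from by omega, show n - 1 + 1 = n from by omega,
          hn0, hnR, hB] at he
      · exact he ((ih (n - 1) (by omega)).2 (by rwa [show n - 1 + 2 = n + 1 from by omega]))
    · have hgg : f (n + 1) ≠ 0 := by
        intro h0
        exact hne (by simp [tailF, dB, hn0, hB, hA, h0])
      rcases coverR hb (by omega) hgg with hc | hc
      · exact hB hc
      · exact hA hc

end Operators
section Inversion

/-- P3 : `∂ (α g) = g`. -/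
lemma dB_aB {g : ℕ → ℕ} (h0 : g 0 = 0) (hb : BddF g) : dB (aB g) = g := by
  funext n
  by_cases hn0 : n = 0
  · simp [dB, hn0, h0]
  have hR1 := R_aB hb n
  have hR2 : n + 1 ∈ Rset (aB g) ↔ n ∈ Lset g := by
    rw [R_aB hb (n + 1)]
    constructor
    · rintro ⟨_, h⟩; simpa using h
    · intro h; exact ⟨by have := (Lset_mem h).1; omega, by simpa using h⟩
  by_cases hA : n - 1 ∈ Lset g <;> by_cases hB : n ∈ Lset g
  · exfalso
    have h4 := notL_succ hA
    rw [show n - 1 + 1 = n from by omega] at h4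
    exact h4 hB
  · have h2 : 2 ≤ n := by have := (Lset_mem hA).1; omega
    simp [dB, aB, hn0, hR1, hR2, hA, hB, h2]
  · have hg1 : g n ≠ 0 := (Lset_mem hB).2
    simp [dB, aB, hn0, hR1, hR2, hA, hB]
    omega
  · simp [dB, aB, hn0, hR1, hR2, hA, hB]

lemma one_not_R_aB {g : ℕ → ℕ} (hb : BddF g) : 1 ∉ Rset (aB g) := by
  rw [R_aB hb]; rintro ⟨h, _⟩; omega

/-- P2 : `∂ (β g) = g`. -/
lemma dB_bB {g : ℕ → ℕ} (h0 : g 0 = 0) (hb : BddF g) : dB (bB g) = g := by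
  have hbh : BddF (tailF g) := bdd_tailF hb
  funext n
  by_cases hn0 : n = 0
  · simp [dB, hn0, h0]
  by_cases hn1 : n = 1
  · subst hn1
    have h1 : (1 : ℕ) ∈ Rset (bB g) := (R_bB hb 1).2 (Or.inl rfl)
    have h2 : (2 : ℕ) ∉ Rset (bB g) := by
      rw [R_bB hb]; rintro (h | ⟨h, _⟩) <;> omega
    simp [dB, bB, h1, h2]
  have hn2 : 2 ≤ n := by omega
  have hR1 : n ∈ Rset (bB g) ↔ (3 ≤ n ∧ n - 2 ∈ Lset (tailF g)) := by
    rw [R_bB hb]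
    constructor
    · rintro (h | h); omega; exact h
    · intro h; exact Or.inr h
  have hR2 : n + 1 ∈ Rset (bB g) ↔ n - 1 ∈ Lset (tailF g) := by
    rw [R_bB hb]
    constructor
    · rintro (h | ⟨_, h⟩)
      · omega
      · rwa [show n + 1 - 2 = n - 1 from by omega] at h
    · intro h
      exact Or.inr ⟨by have := (Lset_mem h).1; omega,
        by rwa [show n + 1 - 2 = n - 1 from by omega]⟩
  have hgn : tailF g (n - 1) = g n := by
    simp [tailF, show n - 1 ≠ 0 from by omega, show n - 1 + 1 = n from by omega]
  rw [dB]
  simp only [hn0, if_false]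
  rw [bB_val hn2]
  by_cases hA : n - 2 ∈ Lset (tailF g) <;> by_cases hB : n - 1 ∈ Lset (tailF g)
  · exfalso
    have h4 := notL_succ hA
    rw [show n - 2 + 1 = n - 1 from by omega] at h4
    exact h4 hB
  · have h3 : 3 ≤ n := by have := (Lset_mem hA).1; omega
    simp [aB, show n - 1 ≠ 0 from by omega, show n - 1 - 1 = n - 2 from by omega,
      hR1, hR2, hA, hB, h3, hgn]
  · have hg1 : tailF g (n - 1) ≠ 0 := (Lset_mem hB).2
    simp [aB, show n - 1 ≠ 0 from by omega, show n - 1 - 1 = n - 2 from by omega,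
      hR1, hR2, hA, hB, hgn]
    rw [hgn] at hg1
    omega
  · simp [aB, show n - 1 ≠ 0 from by omega, show n - 1 - 1 = n - 2 from by omega,
      hR1, hR2, hA, hB, hgn]

lemma one_R_bB {g : ℕ → ℕ} (hb : BddF g) : 1 ∈ Rset (bB g) :=
  (R_bB hb 1).2 (Or.inl rfl)

/-- P5 : when `1 ∉ R f`, `α (∂ f) = f`. -/
lemma aB_dB {f : ℕ → ℕ} (hf0 : f 0 = 0) (hb : BddF f) (h1 : 1 ∉ Rset f) :
    aB (dB f) = f := by
  funext n
  by_cases hn0 : n = 0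
  · simp [aB, hn0, hf0]
  have hL1 : n ∈ Lset (dB f) ↔ n + 1 ∈ Rset f := L_dB hb h1 n
  have hL2 : n - 1 ∈ Lset (dB f) ↔ n ∈ Rset f := by
    rcases Nat.eq_or_lt_of_le (show 1 ≤ n from by omega) with h | h
    · constructor
      · intro hc; exact absurd (Lset_mem hc).1 (by omega)
      · intro hc; exact absurd hc (by rw [← h]; exact h1)
    · have := L_dB hb h1 (n - 1)
      rwa [show n - 1 + 1 = n from by omega] at this
  by_cases hA : n ∈ Rset f <;> by_cases hB : n + 1 ∈ Rset f
  · exact absurd hB (notR_succ hA)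
  · have hg1 : f n ≠ 0 := (Rset_mem hA).2
    simp [aB, dB, hn0, hL1, hL2, hA, hB]
    omega
  · simp [aB, dB, hn0, hL1, hL2, hA, hB]
  · simp [aB, dB, hn0, hL1, hL2, hA, hB]

/-- P4 : when `1 ∈ R f`, `β (∂ f) = f`. -/
lemma bB_dB {f : ℕ → ℕ} (hf0 : f 0 = 0) (hb : BddF f) (h1 : 1 ∈ Rset f) :
    bB (dB f) = f := by
  funext n
  by_cases hn0 : n = 0
  · simp [bB, hn0, hf0]
  by_cases hn1 : n = 1
  · subst hn1
    have h2 : (2 : ℕ) ∉ Rset f := notR_succ h1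
    have hg1 : f 1 ≠ 0 := (Rset_mem h1).2
    simp [bB, dB, h1, h2]
    omega
  have hn2 : 2 ≤ n := by omega
  have hL1 : n - 1 ∈ Lset (tailF (dB f)) ↔ n + 1 ∈ Rset f := by
    have := L_tail_dB hb h1 (n - 1)
    rwa [show n - 1 + 2 = n + 1 from by omega] at this
  have hL2 : n - 2 ∈ Lset (tailF (dB f)) ↔ n ∈ Rset f := by
    rcases Nat.eq_or_lt_of_le hn2 with h | h
    · constructor
      · intro hc; exact absurd (Lset_mem hc).1 (by omega)
      · intro hc
        exact absurd hc (by rw [← h] at *; exact notR_succ h1)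
    · have := L_tail_dB hb h1 (n - 2)
      rwa [show n - 2 + 2 = n from by omega] at this
  have hgn : tailF (dB f) (n - 1) = dB f n := by
    simp [tailF, show n - 1 ≠ 0 from by omega, show n - 1 + 1 = n from by omega]
  rw [bB_val hn2]
  by_cases hA : n ∈ Rset f <;> by_cases hB : n + 1 ∈ Rset f
  · exact absurd hB (notR_succ hA)
  · have hg1 : f n ≠ 0 := (Rset_mem hA).2
    simp [aB, show n - 1 ≠ 0 from by omega, show n - 1 - 1 = n - 2 from by omega,
      hgn, hL1, hL2, hA, hB, dB, hn0]
    omega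
  · simp [aB, show n - 1 ≠ 0 from by omega, show n - 1 - 1 = n - 2 from by omega,
      hgn, hL1, hL2, hA, hB, dB, hn0]
  · simp [aB, show n - 1 ≠ 0 from by omega, show n - 1 - 1 = n - 2 from by omega,
      hgn, hL1, hL2, hA, hB, dB, hn0]

lemma dB_ne_zeroF {f : ℕ → ℕ} (hf0 : f 0 = 0) (hb : BddF f) (hfz : f ≠ zeroF)
    (h1 : 1 ∉ Rset f) : dB f ≠ zeroF := by
  intro hz
  apply hfz
  rw [← aB_dB hf0 hb h1, hz, aB_zeroF]

end Inversion
section Sums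

lemma flen_eq_sum {f : ℕ → ℕ} {N : ℕ} (hN : ∀ n, N ≤ n → f n = 0) :
    flen f = ∑ n ∈ Finset.range N, f n := by
  apply finsum_eq_sum_of_support_subset
  intro x hx
  simp only [Function.mem_support] at hx
  simp only [Finset.coe_range, Set.mem_Iio]
  by_contra h
  exact hx (hN x (by omega))

lemma fsize_eq_sum {f : ℕ → ℕ} {N : ℕ} (hN : ∀ n, N ≤ n → f n = 0) :
    fsize f = ∑ n ∈ Finset.range N, n * f n := by
  apply finsum_eq_sum_of_support_subset
  intro x hx
  simp only [Function.mem_support] at hx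
  simp only [Finset.coe_range, Set.mem_Iio]
  by_contra h
  exact hx (by rw [hN x (by omega)]; ring)

lemma flen_zeroF : flen zeroF = 0 := by
  have : flen zeroF = ∑ n ∈ Finset.range 0, zeroF n := flen_eq_sum (fun n _ => rfl)
  simpa using this

lemma exists_ne_zero {f : ℕ → ℕ} (hne : f ≠ zeroF) : ∃ q, f q ≠ 0 := by
  by_contra h
  push_neg at h
  exact hne (funext fun n => h n)

lemma zero_not_Lset {g : ℕ → ℕ} : (0 : ℕ) ∉ Lset g :=
  fun h => absurd (Lset_mem h).1 (by omega)

lemma flen_aB {g : ℕ → ℕ} (h0 : g 0 = 0) (hb : BddF g) : flen (aB g) = flen g := by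
  obtain ⟨N, hN⟩ := hb
  obtain ⟨N2, hN2⟩ := bdd_aB ⟨N, hN⟩
  set K := N + N2 + 2 with hK
  have e1 : flen (aB g) = ∑ n ∈ Finset.range (K + 1), aB g n :=
    flen_eq_sum (fun n hn => hN2 n (by omega))
  have e2 : flen g = ∑ n ∈ Finset.range (K + 1), g n :=
    flen_eq_sum (fun n hn => hN n (by omega))
  have ht : ∀ n, aB g n + (if n ∈ Lset g then 1 else 0)
      = g n + (if n - 1 ∈ Lset g then 1 else 0) := by
    intro n
    by_cases hn0 : n = 0
    · subst hn0
      simp [aB, h0, zero_not_Lset]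
    by_cases hA : n ∈ Lset g <;> by_cases hB : n - 1 ∈ Lset g
    · exfalso
      have h4 := notL_succ hB
      rw [show n - 1 + 1 = n from by omega] at h4
      exact h4 hA
    · have hg1 := (Lset_mem hA).2
      simp [aB, hn0, hA, hB]
      omega
    · simp [aB, hn0, hA, hB]
    · simp [aB, hn0, hA, hB]
  have hsum : ∑ n ∈ Finset.range (K + 1), (aB g n + (if n ∈ Lset g then 1 else 0))
      = ∑ n ∈ Finset.range (K + 1), (g n + (if n - 1 ∈ Lset g then 1 else 0)) :=
    Finset.sum_congr rfl (fun n _ => ht n)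
  rw [Finset.sum_add_distrib, Finset.sum_add_distrib] at hsum
  have h3 : ∑ n ∈ Finset.range (K + 1), (if n - 1 ∈ Lset g then 1 else 0)
      = ∑ n ∈ Finset.range K, (if n ∈ Lset g then (1:ℕ) else 0) := by
    rw [Finset.sum_range_succ' (fun n => if n - 1 ∈ Lset g then (1:ℕ) else 0) K]
    simp [zero_not_Lset]
  have h4 : ∑ n ∈ Finset.range (K + 1), (if n ∈ Lset g then (1:ℕ) else 0)
      = ∑ n ∈ Finset.range K, (if n ∈ Lset g then (1:ℕ) else 0) := by
    rw [Finset.sum_range_succ]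
    have hK2 : K ∉ Lset g := fun h => (Lset_mem h).2 (hN K (by omega))
    simp [hK2]
  rw [e1, e2]
  omega

lemma aB_zero_eval {g : ℕ → ℕ} : aB g 0 = 0 := by simp [aB]

lemma flen_tailF {g : ℕ → ℕ} (h0 : g 0 = 0) (hb : BddF g) :
    flen g = flen (tailF g) + g 1 := by
  obtain ⟨N, hN⟩ := hb
  set K := N + 1 with hK
  have e2 : flen g = ∑ n ∈ Finset.range (K + 2), g n :=
    flen_eq_sum (fun n hn => hN n (by omega))
  have e3 : flen (tailF g) = ∑ n ∈ Finset.range (K + 1), tailF g n :=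
    flen_eq_sum (fun n hn => by simp [tailF, show n ≠ 0 from by omega, hN (n+1) (by omega)])
  have e4 : ∑ n ∈ Finset.range (K + 1), tailF g n = ∑ n ∈ Finset.range K, g (n + 2) := by
    rw [Finset.sum_range_succ' (fun n => tailF g n) K]
    simp [tailF]
  have e5 : ∑ n ∈ Finset.range (K + 2), g n
      = ∑ n ∈ Finset.range K, g (n + 2) + g 1 + g 0 := by
    rw [Finset.sum_range_succ' (fun n => g n) (K + 1),
      Finset.sum_range_succ' (fun n => g (n + 1)) K]
  rw [e2, e3, e4, e5, h0]
  omega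

lemma flen_bB {g : ℕ → ℕ} (h0 : g 0 = 0) (hb : BddF g) : flen (bB g) = flen g + 1 := by
  have hbh : BddF (tailF g) := bdd_tailF hb
  have key1 : flen (aB (tailF g)) = flen (tailF g) := flen_aB rfl hbh
  obtain ⟨N1, hN1⟩ := bdd_bB hb
  obtain ⟨N2, hN2⟩ := bdd_aB hbh
  set K := N1 + N2 + 2 with hK
  have e1 : flen (bB g) = ∑ n ∈ Finset.range (K + 2), bB g n :=
    flen_eq_sum (fun n hn => hN1 n (by omega))
  have e2 : ∑ n ∈ Finset.range (K + 2), bB g n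
      = ∑ n ∈ Finset.range K, bB g (n + 2) + bB g 1 + bB g 0 := by
    rw [Finset.sum_range_succ' (fun n => bB g n) (K + 1),
      Finset.sum_range_succ' (fun n => bB g (n + 1)) K]
  have e3 : ∀ n, bB g (n + 2) = aB (tailF g) (n + 1) := by
    intro n
    rw [bB_val (by omega)]
    norm_num
  have e4 : flen (aB (tailF g)) = ∑ n ∈ Finset.range (K + 1), aB (tailF g) n :=
    flen_eq_sum (fun n hn => hN2 n (by omega))
  have e5 : ∑ n ∈ Finset.range (K + 1), aB (tailF g) n
      = ∑ n ∈ Finset.range K, aB (tailF g) (n + 1) + aB (tailF g) 0 :=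
    Finset.sum_range_succ' _ K
  have e6 : bB g 1 = g 1 + 1 := by simp [bB]
  have e7 : bB g 0 = 0 := by simp [bB]
  have e8 : flen g = flen (tailF g) + g 1 := flen_tailF h0 hb
  have e9 : ∑ n ∈ Finset.range K, bB g (n + 2)
      = ∑ n ∈ Finset.range K, aB (tailF g) (n + 1) :=
    Finset.sum_congr rfl (fun n _ => e3 n)
  rw [e1, e2, e6, e7, e9, e8]
  rw [e4, e5, aB_zero_eval] at key1
  omega

lemma fsize_dB_lt {f : ℕ → ℕ} (hf : IsFreq f) (hne : f ≠ zeroF) :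
    fsize (dB f) < fsize f := by
  obtain ⟨N, hN⟩ := hf.bdd
  obtain ⟨N1, hN1⟩ := bdd_dB hf.bdd
  set K := N + N1 + 1 with hK
  set r : ℕ → ℕ := fun m => if m ∈ Rset f then 1 else 0 with hr
  have e1 : fsize f = ∑ n ∈ Finset.range (K + 1), n * f n :=
    fsize_eq_sum (fun n hn => hN n (by omega))
  have e2 : fsize (dB f) = ∑ n ∈ Finset.range (K + 1), n * dB f n :=
    fsize_eq_sum (fun n hn => hN1 n (by omega))
  have ht : ∀ n, n * dB f n + n * r n = n * f n + n * r (n + 1) := by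
    intro n
    by_cases hn0 : n = 0
    · simp [hn0]
    by_cases hA : n ∈ Rset f <;> by_cases hB : n + 1 ∈ Rset f
    · exact absurd hB (notR_succ hA)
    · obtain ⟨c, hc⟩ : ∃ c, f n = c + 1 := ⟨f n - 1, by have := (Rset_mem hA).2; omega⟩
      simp [dB, hr, hn0, hA, hB, hc]
      ring
    · simp [dB, hr, hn0, hA, hB]
      ring
    · simp [dB, hr, hn0, hA, hB]
  have hsum : ∑ n ∈ Finset.range (K + 1), (n * dB f n + n * r n)
      = ∑ n ∈ Finset.range (K + 1), (n * f n + n * r (n + 1)) :=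
    Finset.sum_congr rfl (fun n _ => ht n)
  rw [Finset.sum_add_distrib, Finset.sum_add_distrib] at hsum
  have hA : ∑ n ∈ Finset.range (K + 1), n * r n
      = ∑ n ∈ Finset.range K, (n + 1) * r (n + 1) := by
    rw [Finset.sum_range_succ' (fun n => n * r n) K]
    simp
  have hB : ∑ n ∈ Finset.range (K + 1), n * r (n + 1)
      = ∑ n ∈ Finset.range K, n * r (n + 1) := by
    rw [Finset.sum_range_succ]
    have : K + 1 ∉ Rset f := fun h => (Rset_mem h).2 (hN (K + 1) (by omega))
    simp [hr, this]
  have hAB : ∑ n ∈ Finset.range K, (n + 1) * r (n + 1)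
      = ∑ n ∈ Finset.range K, n * r (n + 1) + ∑ n ∈ Finset.range K, r (n + 1) := by
    rw [← Finset.sum_add_distrib]
    exact Finset.sum_congr rfl (fun n _ => by ring)
  have hC : 1 ≤ ∑ n ∈ Finset.range K, r (n + 1) := by
    obtain ⟨q, hq⟩ := exists_ne_zero hne
    have hq1 : 1 ≤ q := by
      rcases Nat.eq_zero_or_pos q with h | h
      · exact absurd (h ▸ hf.1) hq
      · exact h
    have hqN : q ≤ N := by
      by_contra h
      exact hq (hN q (by omega))
    obtain ⟨q0, hq0⟩ : ∃ q0, q0 ∈ Rset f ∧ 1 ≤ q0 ∧ q0 ≤ N + 1 := by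
      rcases coverR hf.bdd hq1 hq with h | h
      · exact ⟨q, h, hq1, by omega⟩
      · exact ⟨q + 1, h, by omega, by omega⟩
    calc (1 : ℕ) = r (q0 - 1 + 1) := by
          rw [show q0 - 1 + 1 = q0 from by omega]
          simp [hr, hq0.1]
      _ ≤ ∑ n ∈ Finset.range K, r (n + 1) :=
          Finset.single_le_sum (f := fun n => r (n + 1)) (fun _ _ => Nat.zero_le _)
            (Finset.mem_range.2 (by omega))
  rw [e1, e2]
  omega

end Sums
section Code

lemma IsFreq_zeroF : IsFreq zeroF := ⟨rfl, by simp [zeroF, Function.support]⟩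

lemma IsFreq_dB {f : ℕ → ℕ} (hf : IsFreq f) : IsFreq (dB f) :=
  isFreq_of_bdd (by simp [dB]) (bdd_dB hf.bdd)

lemma IsFreq_aB {f : ℕ → ℕ} (hf : IsFreq f) : IsFreq (aB f) :=
  isFreq_of_bdd (by simp [aB]) (bdd_aB hf.bdd)

lemma IsFreq_bB {f : ℕ → ℕ} (hf : IsFreq f) : IsFreq (bB f) :=
  isFreq_of_bdd (by simp [bB]) (bdd_bB hf.bdd)

lemma exists_iter_dB {f : ℕ → ℕ} (hf : IsFreq f) : ∃ m, dB^[m] f = zeroF := by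
  suffices H : ∀ s f, IsFreq f → fsize f ≤ s → ∃ m, dB^[m] f = zeroF from
    H (fsize f) f hf le_rfl
  intro s
  induction s with
  | zero =>
    intro f hf hs
    by_cases hz : f = zeroF
    · exact ⟨0, hz⟩
    · exact absurd (fsize_dB_lt hf hz) (by omega)
  | succ s ih =>
    intro f hf hs
    by_cases hz : f = zeroF
    · exact ⟨0, hz⟩
    · obtain ⟨m, hm⟩ := ih (dB f) (IsFreq_dB hf) (by have := fsize_dB_lt hf hz; omega)
      exact ⟨m + 1, by rwa [Function.iterate_succ_apply]⟩

lemma chainK_zeroF : chainK zeroF = 0 := by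
  rw [chainK, dif_pos ⟨0, rfl⟩]
  rw [Nat.find_eq_zero]
  rfl

lemma chainK_succ {f : ℕ → ℕ} (hf : IsFreq f) (hne : f ≠ zeroF) :
    chainK f = chainK (dB f) + 1 := by
  have h1 : ∃ m, dB^[m] f = zeroF := exists_iter_dB hf
  have h2 : ∃ m, dB^[m] (dB f) = zeroF := exists_iter_dB (IsFreq_dB hf)
  rw [chainK, chainK, dif_pos h1, dif_pos h2]
  rw [Nat.find_eq_iff]
  constructor
  · rw [Function.iterate_succ_apply]
    exact Nat.find_spec h2
  · intro m hm hc
    cases m with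
    | zero => exact hne hc
    | succ m' =>
      rw [Function.iterate_succ_apply] at hc
      exact Nat.find_min h2 (by omega) hc

lemma chainK_pos {f : ℕ → ℕ} (hf : IsFreq f) (hne : f ≠ zeroF) : 1 ≤ chainK f := by
  rw [chainK_succ hf hne]; omega

lemma burgeCode_length {f : ℕ → ℕ} : (burgeCode f).length = chainK f + 1 := by
  simp [burgeCode]

lemma burgeCode_zeroF : burgeCode zeroF = [false] := by
  rw [burgeCode, chainK_zeroF]
  rw [show List.range 1 = [0] from rfl]
  rw [List.map_singleton]
  rw [Function.iterate_zero_apply, Rset_zeroF]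
  simp

lemma burgeCode_cons {f : ℕ → ℕ} (hf : IsFreq f) (hne : f ≠ zeroF) :
    burgeCode f = (if 1 ∈ Rset f then true else false) :: burgeCode (dB f) := by
  rw [burgeCode, burgeCode, chainK_succ hf hne, List.range_succ_eq_map, List.map_cons,
    List.map_map]
  rw [Function.iterate_zero_apply]
  congr 1

/-- the language `(a*b)*a`. -/
inductive GoodW : List Bool → Prop
  | base : GoodW [false]
  | btrue (w : List Bool) : GoodW w → GoodW (true :: w)
  | bfalse (w : List Bool) : GoodW w → 2 ≤ w.length → GoodW (false :: w)

lemma good_burgeCode {f : ℕ → ℕ} (hf : IsFreq f) : GoodW (burgeCode f) := by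
  suffices H : ∀ s f, IsFreq f → fsize f ≤ s → GoodW (burgeCode f) from
    H (fsize f) f hf le_rfl
  intro s
  induction s with
  | zero =>
    intro f hf hs
    by_cases hz : f = zeroF
    · rw [hz, burgeCode_zeroF]; exact GoodW.base
    · exact absurd (fsize_dB_lt hf hz) (by omega)
  | succ s ih =>
    intro f hf hs
    by_cases hz : f = zeroF
    · rw [hz, burgeCode_zeroF]; exact GoodW.base
    have hlt := fsize_dB_lt hf hz
    have hG : GoodW (burgeCode (dB f)) := ih (dB f) (IsFreq_dB hf) (by omega)
    rw [burgeCode_cons hf hz]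
    by_cases h1 : 1 ∈ Rset f
    · simpa [h1] using GoodW.btrue _ hG
    · have hdne : dB f ≠ zeroF := dB_ne_zeroF hf.1 hf.bdd hz h1
      have hlen : 2 ≤ (burgeCode (dB f)).length := by
        rw [burgeCode_length]
        have := chainK_pos (IsFreq_dB hf) hdne
        omega
      simpa [h1] using GoodW.bfalse _ hG hlen

/-- decoding a word into a frequency sequence. -/
noncomputable def decodeF : List Bool → (ℕ → ℕ)
  | [] => zeroF
  | x :: w => if x then bB (decodeF w) else aB (decodeF w)

lemma decodeF_cons_true {w : List Bool} : decodeF (true :: w) = bB (decodeF w) := by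
  simp [decodeF]

lemma decodeF_cons_false {w : List Bool} : decodeF (false :: w) = aB (decodeF w) := by
  simp [decodeF]

lemma IsFreq_decodeF (w : List Bool) : IsFreq (decodeF w) := by
  induction w with
  | nil => exact IsFreq_zeroF
  | cons x w ih =>
    by_cases hx : x = true
    · simp [decodeF, hx]; exact IsFreq_bB ih
    · simp at hx
      simp [decodeF, hx]; exact IsFreq_aB ih

lemma decode_burgeCode {f : ℕ → ℕ} (hf : IsFreq f) : decodeF (burgeCode f) = f := by
  suffices H : ∀ s f, IsFreq f → fsize f ≤ s → decodeF (burgeCode f) = f from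
    H (fsize f) f hf le_rfl
  intro s
  induction s with
  | zero =>
    intro f hf hs
    by_cases hz : f = zeroF
    · rw [hz, burgeCode_zeroF]
      simp [decodeF, aB_zeroF]
    · exact absurd (fsize_dB_lt hf hz) (by omega)
  | succ s ih =>
    intro f hf hs
    by_cases hz : f = zeroF
    · rw [hz, burgeCode_zeroF]
      simp [decodeF, aB_zeroF]
    have hlt := fsize_dB_lt hf hz
    have hIH : decodeF (burgeCode (dB f)) = dB f := ih (dB f) (IsFreq_dB hf) (by omega)
    rw [burgeCode_cons hf hz]
    by_cases h1 : 1 ∈ Rset f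
    · simp [decodeF, h1, hIH]
      exact bB_dB hf.1 hf.bdd h1
    · simp [decodeF, h1, hIH]
      exact aB_dB hf.1 hf.bdd h1

lemma bB_ne_zeroF {g : ℕ → ℕ} : bB g ≠ zeroF := by
  intro h
  have := congrFun h 1
  simp [bB, zeroF] at this

lemma aB_ne_zeroF {g : ℕ → ℕ} (hg : IsFreq g) (hne : g ≠ zeroF) : aB g ≠ zeroF := by
  intro h
  apply hne
  rw [← dB_aB hg.1 hg.bdd, h, dB_zeroF]

lemma decode_ne_zeroF {w : List Bool} (hw : GoodW w) (hlen : 2 ≤ w.length) :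
    decodeF w ≠ zeroF := by
  induction hw with
  | base => simp at hlen
  | btrue w hw ih =>
    rw [decodeF_cons_true]
    exact bB_ne_zeroF
  | bfalse w hw hl ih =>
    have h1 : decodeF w ≠ zeroF := ih hl
    rw [decodeF_cons_false]
    exact aB_ne_zeroF (IsFreq_decodeF w) h1

lemma burgeCode_decode {w : List Bool} (hw : GoodW w) : burgeCode (decodeF w) = w := by
  induction hw with
  | base =>
    show burgeCode (decodeF [false]) = [false]
    rw [show decodeF [false] = aB (decodeF []) from decodeF_cons_false, show decodeF [] = zeroF from rfl,
      aB_zeroF, burgeCode_zeroF]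
  | btrue w hw ih =>
    rw [decodeF_cons_true]
    have hg : IsFreq (decodeF w) := IsFreq_decodeF w
    rw [burgeCode_cons (IsFreq_bB hg) bB_ne_zeroF]
    rw [dB_bB hg.1 hg.bdd, if_pos (one_R_bB hg.bdd), ih]
  | bfalse w hw hl ih =>
    rw [decodeF_cons_false]
    have hg : IsFreq (decodeF w) := IsFreq_decodeF w
    have hne : decodeF w ≠ zeroF := decode_ne_zeroF hw hl
    rw [burgeCode_cons (IsFreq_aB hg) (aB_ne_zeroF hg hne)]
    rw [dB_aB hg.1 hg.bdd, if_neg (one_not_R_aB hg.bdd), ih]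

lemma flen_count {f : ℕ → ℕ} (hf : IsFreq f) :
    flen f = (burgeCode f).count true := by
  suffices H : ∀ s f, IsFreq f → fsize f ≤ s → flen f = (burgeCode f).count true from
    H (fsize f) f hf le_rfl
  intro s
  induction s with
  | zero =>
    intro f hf hs
    by_cases hz : f = zeroF
    · rw [hz, burgeCode_zeroF, flen_zeroF]
      simp
    · exact absurd (fsize_dB_lt hf hz) (by omega)
  | succ s ih =>
    intro f hf hs
    by_cases hz : f = zeroF
    · rw [hz, burgeCode_zeroF, flen_zeroF]
      simp
    have hlt := fsize_dB_lt hf hz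
    have hIH : flen (dB f) = (burgeCode (dB f)).count true :=
      ih (dB f) (IsFreq_dB hf) (by omega)
    rw [burgeCode_cons hf hz]
    by_cases h1 : 1 ∈ Rset f
    · have hfb : f = bB (dB f) := (bB_dB hf.1 hf.bdd h1).symm
      have : flen f = flen (dB f) + 1 := by
        conv_lhs => rw [hfb]
        exact flen_bB (IsFreq_dB hf).1 (bdd_dB hf.bdd)
      rw [this, hIH]
      simp [h1, List.count_cons]
    · have hfb : f = aB (dB f) := (aB_dB hf.1 hf.bdd h1).symm
      have : flen f = flen (dB f) := by
        conv_lhs => rw [hfb]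
        exact flen_aB (IsFreq_dB hf).1 (bdd_dB hf.bdd)
      rw [this, hIH]
      simp [h1, List.count_cons]

end Code
section Words

/-- a block `a^c b^d`. -/
def blockW (c d : ℕ) : List Bool := List.replicate c false ++ List.replicate d true

/-- the word determined by a list of blocks, with final `a`. -/
def mkWord : List (ℕ × ℕ) → List Bool
  | [] => [false]
  | p :: L => blockW p.1 p.2 ++ mkWord L

/-- partial sums of block lengths. -/
def sumsW : List (ℕ × ℕ) → List ℕ
  | [] => []
  | p :: L => (p.1 + p.2) :: (sumsW L).map (· + (p.1 + p.2))

lemma replicate_get? {α : Type*} (a : α) : ∀ (n m : ℕ),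
    (List.replicate n a)[m]? = if m < n then some a else none := by
  intro n
  induction n with
  | zero => intro m; simp
  | succ n ih =>
    intro m
    cases m with
    | zero => simp [List.replicate_succ]
    | succ m =>
      rw [List.replicate_succ]
      simp only [List.getElem?_cons_succ, ih m]
      by_cases h : m < n
      · rw [if_pos h, if_pos (by omega)]
      · rw [if_neg h, if_neg (by omega)]

lemma block_get? (c d : ℕ) (v : List Bool) (m : ℕ) :
    (List.replicate c false ++ List.replicate d true ++ v)[m]? =
      if m < c then some false else if m < c + d then some true
      else v[m - (c + d)]? := by
  by_cases h1 : m < c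
  · rw [List.append_assoc, List.getElem?_append_left (by simpa using h1), replicate_get?,
      if_pos h1, if_pos h1]
  · by_cases h2 : m < c + d
    · rw [List.append_assoc, List.getElem?_append_right (by simpa using h1),
        List.getElem?_append_left (by simp [List.length_replicate]; omega), replicate_get?,
        if_pos (by simp [List.length_replicate]; omega), if_neg h1, if_pos h2]
    · rw [List.append_assoc, List.getElem?_append_right (by simpa using h1),
        List.getElem?_append_right (by simp [List.length_replicate]; omega), if_neg h1, if_neg h2]
      simp [List.length_replicate]
      congr 1
      omega

lemma descSet_block (c d : ℕ) (hd : 1 ≤ d) (v : List Bool) (hv : v[0]? = some false) :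
    descSet (List.replicate c false ++ List.replicate d true ++ v)
      = insert (c + d) ((fun x => x + (c + d)) '' descSet v) := by
  ext p
  simp only [descSet, Set.mem_setOf_eq, Set.mem_insert_iff, Set.mem_image]
  constructor
  · rintro ⟨hp1, hpt, hpf⟩
    rw [block_get? c d v] at hpt hpf
    by_cases hA : p < c
    · rw [if_pos (by omega)] at hpt
      exact absurd hpt (by simp)
    by_cases hB : p < c + d
    · rw [if_neg hA, if_pos hB] at hpf
      exact absurd hpf (by simp)
    by_cases hC : p = c + d
    · exact Or.inl hC
    · rw [if_neg (by omega), if_neg (by omega)] at hpf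
      rw [if_neg (by omega), if_neg (by omega)] at hpt
      refine Or.inr ⟨p - (c + d), ⟨by omega, ?_, hpf⟩, by omega⟩
      rwa [show p - 1 - (c + d) = p - (c + d) - 1 from by omega] at hpt
  · rintro (rfl | ⟨x, ⟨hx1, hxt, hxf⟩, rfl⟩)
    · refine ⟨by omega, ?_, ?_⟩
      · rw [block_get?, if_neg (by omega), if_pos (by omega)]
      · rw [block_get?, if_neg (by omega), if_neg (by omega),
          show c + d - (c + d) = 0 from by omega, hv]
    · refine ⟨by omega, ?_, ?_⟩
      · rw [block_get?, if_neg (by omega), if_neg (by omega),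
          show x + (c + d) - 1 - (c + d) = x - 1 from by omega, hxt]
      · rw [block_get?, if_neg (by omega), if_neg (by omega),
          show x + (c + d) - (c + d) = x from by omega, hxf]

lemma descSet_single : descSet [false] = ∅ := by
  ext p
  simp only [descSet, Set.mem_setOf_eq, Set.mem_empty_iff_false, iff_false]
  rintro ⟨hp1, hpt, hpf⟩
  rcases Nat.eq_or_lt_of_le hp1 with h | h
  · rw [← h] at hpt
    simp at hpt
  · rw [List.getElem?_eq_none_iff.2 (by simp; omega)] at hpt
    simp at hpt

lemma mkWord_get0 : ∀ (L : List (ℕ × ℕ)), (∀ p ∈ L, 1 ≤ p.1) →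
    (mkWord L)[0]? = some false := by
  rintro (_ | ⟨p, L⟩) h
  · rfl
  · show (blockW p.1 p.2 ++ mkWord L)[0]? = some false
    rw [blockW, block_get?, if_pos (show 0 < p.1 from h p (by simp))]

lemma descSet_mkWord : ∀ (L : List (ℕ × ℕ)), (∀ p ∈ L, 1 ≤ p.2) →
    (∀ p ∈ L.tail, 1 ≤ p.1) → descSet (mkWord L) = {x | x ∈ sumsW L} := by
  intro L
  induction L with
  | nil =>
    intro _ _
    rw [show mkWord [] = [false] from rfl, descSet_single]
    simp [sumsW]
  | cons p L ih =>
    intro hd hc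
    have hv : (mkWord L)[0]? = some false :=
      mkWord_get0 L (fun p hp => hc p (by simpa using hp))
    show descSet (blockW p.1 p.2 ++ mkWord L) = _
    rw [blockW,
      descSet_block p.1 p.2 (hd p (by simp)) _ hv,
      ih (fun p hp => hd p (by simp [hp])) (fun p hp => hc p (List.mem_of_mem_tail (by simpa using hp)))]
    ext x
    simp only [Set.mem_insert_iff, Set.mem_image, Set.mem_setOf_eq, sumsW, List.mem_cons,
      List.mem_map]

lemma mkWord_length_pos : ∀ (L : List (ℕ × ℕ)), 1 ≤ (mkWord L).length := by
  rintro (_ | ⟨p, L⟩)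
  · simp [mkWord]
  · show 1 ≤ (blockW p.1 p.2 ++ mkWord L).length
    simp only [List.length_append]
    have := mkWord_length_pos L
    omega

lemma goodW_rep_true {w : List Bool} (hw : GoodW w) (d : ℕ) :
    GoodW (List.replicate d true ++ w) := by
  induction d with
  | zero => simpa using hw
  | succ d ih =>
    rw [List.replicate_succ, List.cons_append]
    exact GoodW.btrue _ ih

lemma goodW_length {w : List Bool} (hw : GoodW w) : 1 ≤ w.length := by
  cases hw <;> simp

lemma goodW_rep_false {w : List Bool} (hw : GoodW w) (hlen : 2 ≤ w.length) (c : ℕ) :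
    GoodW (List.replicate c false ++ w) := by
  induction c with
  | zero => simpa using hw
  | succ c ih =>
    rw [List.replicate_succ, List.cons_append]
    refine GoodW.bfalse _ ih ?_
    simp only [List.length_append, List.length_replicate]
    omega

lemma goodW_mkWord : ∀ (L : List (ℕ × ℕ)), (∀ p ∈ L, 1 ≤ p.2) →
    (∀ p ∈ L.tail, 1 ≤ p.1) → GoodW (mkWord L) := by
  intro L
  induction L with
  | nil => intro _ _; exact GoodW.base
  | cons p L ih =>
    intro hd hc
    have hG : GoodW (mkWord L) :=
      ih (fun x hx => hd x (by simp [hx])) (fun x hx => hc x (List.mem_of_mem_tail (by simpa using hx)))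
    show GoodW (blockW p.1 p.2 ++ mkWord L)
    rw [blockW, List.append_assoc]
    have hd1 : 1 ≤ p.2 := hd p (by simp)
    have hbt : GoodW (List.replicate p.2 true ++ mkWord L) := goodW_rep_true hG p.2
    refine goodW_rep_false hbt ?_ p.1
    simp only [List.length_append, List.length_replicate]
    have := mkWord_length_pos L
    omega

lemma good_decomp {w : List Bool} (hw : GoodW w) :
    ∃ L, w = mkWord L ∧ (∀ p ∈ L, 1 ≤ p.2) ∧ (∀ p ∈ L.tail, 1 ≤ p.1) := by
  induction hw with
  | base => exact ⟨[], rfl, by simp, by simp⟩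
  | btrue w hw ih =>
    obtain ⟨L, rfl, hd, hc⟩ := ih
    cases L with
    | nil =>
      refine ⟨[(0, 1)], ?_, by simp, by simp⟩
      show true :: mkWord [] = blockW 0 1 ++ mkWord []
      simp [blockW, mkWord]
    | cons p L' =>
      by_cases hp1 : p.1 = 0
      · refine ⟨(0, p.2 + 1) :: L', ?_, ?_, ?_⟩
        · show true :: (blockW p.1 p.2 ++ mkWord L') = blockW 0 (p.2 + 1) ++ mkWord L'
          simp [blockW, hp1, List.replicate_succ]
        · intro x hx
          rcases List.mem_cons.1 hx with rfl | hx
          · simp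
          · exact hd x (by simp [hx])
        · intro x hx
          exact hc x (by simpa using hx)
      · refine ⟨(0, 1) :: p :: L', ?_, ?_, ?_⟩
        · show true :: (blockW p.1 p.2 ++ mkWord L') = blockW 0 1 ++ (blockW p.1 p.2 ++ mkWord L')
          simp [blockW]
        · intro x hx
          rcases List.mem_cons.1 hx with rfl | hx
          · simp
          rcases List.mem_cons.1 hx with rfl | hx
          · exact hd _ (by simp)
          · exact hd x (by simp [hx])
        · intro x hx
          rcases List.mem_cons.1 hx with rfl | hx
          · omega
          · exact hc x (by simpa using hx)
  | bfalse w hw hlen ih =>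
    obtain ⟨L, rfl, hd, hc⟩ := ih
    cases L with
    | nil => simp [mkWord] at hlen
    | cons p L' =>
      refine ⟨(p.1 + 1, p.2) :: L', ?_, ?_, ?_⟩
      · show false :: (blockW p.1 p.2 ++ mkWord L') = blockW (p.1 + 1) p.2 ++ mkWord L'
        simp [blockW, List.replicate_succ]
      · intro x hx
        rcases List.mem_cons.1 hx with rfl | hx
        · exact hd p (by simp)
        · exact hd x (by simp [hx])
      · intro x hx
        exact hc x (by simpa using hx)

lemma sumsW_length : ∀ (L : List (ℕ × ℕ)), (sumsW L).length = L.length := by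
  rintro (_ | ⟨p, L⟩)
  · rfl
  · show ((p.1 + p.2) :: (sumsW L).map _).length = _
    simp [sumsW_length L]

lemma sumsW_pos : ∀ (L : List (ℕ × ℕ)), (∀ p ∈ L, 1 ≤ p.2) → ∀ x ∈ sumsW L, 1 ≤ x := by
  rintro (_ | ⟨p, L⟩) hd x hx
  · simp [sumsW] at hx
  · rcases List.mem_cons.1 hx with rfl | hx
    · have := hd p (by simp); omega
    · rcases List.mem_map.1 hx with ⟨y, hy, rfl⟩
      have := hd p (by simp)
      omega

lemma sumsW_sorted : ∀ (L : List (ℕ × ℕ)), (∀ p ∈ L, 1 ≤ p.2) →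
    (sumsW L).Pairwise (· < ·) := by
  rintro (_ | ⟨p, L⟩) hd
  · simp [sumsW]
  · show ((p.1 + p.2) :: (sumsW L).map _).Pairwise (· < ·)
    rw [List.pairwise_cons]
    constructor
    · intro x hx
      rcases List.mem_map.1 hx with ⟨y, hy, rfl⟩
      have := sumsW_pos L (fun x hx => hd x (by simp [hx])) y hy
      omega
    · exact List.Pairwise.map _ (fun a b h => by omega)
        (sumsW_sorted L (fun x hx => hd x (by simp [hx])))

lemma pairwise_eq_of_mem_iff : ∀ (l₁ l₂ : List ℕ), l₁.Pairwise (· < ·) →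
    l₂.Pairwise (· < ·) → (∀ x, x ∈ l₁ ↔ x ∈ l₂) → l₁ = l₂ := by
  intro l₁
  induction l₁ with
  | nil =>
    rintro (_ | ⟨b, s⟩) _ _ h
    · rfl
    · exact absurd ((h b).2 (by simp)) (by simp)
  | cons a t ih =>
    rintro (_ | ⟨b, s⟩) h₁ h₂ h
    · exact absurd ((h a).1 (by simp)) (by simp)
    · rw [List.pairwise_cons] at h₁ h₂
      have hab : a = b := by
        rcases List.mem_cons.1 ((h a).1 (by simp)) with h' | h'
        · exact h'
        · rcases List.mem_cons.1 ((h b).2 (by simp)) with h'' | h''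
          · omega
          · have hba := h₁.1 b h''
            have hba2 := h₂.1 a h'
            omega
      subst hab
      have ht : ∀ x, x ∈ t ↔ x ∈ s := by
        intro x
        constructor
        · intro hx
          rcases List.mem_cons.1 ((h x).1 (by simp [hx])) with h' | h'
          · exact absurd (h₁.1 x hx) (by omega)
          · exact h'
        · intro hx
          rcases List.mem_cons.1 ((h x).2 (by simp [hx])) with h' | h'
          · exact absurd (h₂.1 x hx) (by omega)
          · exact h'
      rw [ih s h₁.2 h₂.2 ht]

lemma count_true_mkWord : ∀ (L : List (ℕ × ℕ)),
    (mkWord L).count true = (L.map Prod.snd).sum := by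
  rintro (_ | ⟨p, L⟩)
  · rfl
  · show (blockW p.1 p.2 ++ mkWord L).count true = _
    rw [List.count_append, blockW, List.count_append, count_true_mkWord L]
    simp [List.count_replicate]

lemma sumsW_get?_head (p : ℕ × ℕ) (L : List (ℕ × ℕ)) :
    (sumsW (p :: L))[0]? = some (p.1 + p.2) := rfl

lemma sumsW_rec : ∀ (L : List (ℕ × ℕ)) (t : ℕ) (p : ℕ × ℕ) (x y : ℕ),
    L[t + 1]? = some p → (sumsW L)[t]? = some x →
    (sumsW L)[t + 1]? = some y → y = x + (p.1 + p.2) := by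
  rintro (_ | ⟨p0, L⟩) t p x y hp hx hy
  · simp at hp
  · cases t with
    | zero =>
      rw [sumsW_get?_head] at hx
      cases L with
      | nil => simp at hp
      | cons p1 L' =>
        have hp' : p1 = p := by simpa using hp
        have hy' : y = (p1.1 + p1.2) + (p0.1 + p0.2) := by
          rw [show sumsW (p0 :: p1 :: L') = (p0.1 + p0.2) ::
            (sumsW (p1 :: L')).map (· + (p0.1 + p0.2)) from rfl] at hy
          rw [List.getElem?_cons_succ, List.getElem?_map, sumsW_get?_head] at hy
          simpa using hy.symm
        have hx' : x = p0.1 + p0.2 := by simpa using hx.symm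
        subst hp'
        omega
    | succ t =>
      rw [show sumsW (p0 :: L) = (p0.1 + p0.2) ::
        (sumsW L).map (· + (p0.1 + p0.2)) from rfl] at hx hy
      rw [List.getElem?_cons_succ, List.getElem?_map] at hx hy
      rw [List.getElem?_cons_succ] at hp
      rcases hx' : (sumsW L)[t]? with _ | x'
      · rw [hx'] at hx; simp at hx
      rcases hy' : (sumsW L)[t + 1]? with _ | y'
      · rw [hy'] at hy; simp at hy
      rw [hx'] at hx; rw [hy'] at hy
      simp only [Option.map_some] at hx hy
      cases hx; cases hy
      have := sumsW_rec L t p x' y' hp hx' hy'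
      omega

end Words
section BoxWords

lemma mkWord_cons_eq (p : ℕ × ℕ) (M : List (ℕ × ℕ)) :
    mkWord (p :: M) = List.replicate p.1 false ++ List.replicate p.2 true ++ mkWord M := rfl

lemma mkWord_inj : ∀ (L L' : List (ℕ × ℕ)), (∀ p ∈ L, 1 ≤ p.2) → (∀ p ∈ L', 1 ≤ p.2) →
    (∀ p ∈ L.tail, 1 ≤ p.1) → (∀ p ∈ L'.tail, 1 ≤ p.1) → mkWord L = mkWord L' → L = L' := by
  intro L
  induction L with
  | nil =>
    rintro (_ | ⟨p', M'⟩) hd hd' hc hc' h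
    · rfl
    · exfalso
      have hl := congrArg List.length h
      rw [mkWord_cons_eq] at hl
      simp only [List.length_append, List.length_replicate] at hl
      have h1 := mkWord_length_pos M'
      have h2 := hd' p' (by simp)
      simp [mkWord] at hl
      omega
  | cons p M ih =>
    rintro (_ | ⟨p', M'⟩) hd hd' hc hc' h
    · exfalso
      have hl := congrArg List.length h
      rw [mkWord_cons_eq] at hl
      simp only [List.length_append, List.length_replicate] at hl
      have h1 := mkWord_length_pos M
      have h2 := hd p (by simp)
      simp [mkWord] at hl
      omega
    · have hget : ∀ m : ℕ, (List.replicate p.1 false ++ List.replicate p.2 true ++ mkWord M)[m]?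
          = (List.replicate p'.1 false ++ List.replicate p'.2 true ++ mkWord M')[m]? := by
        intro m
        rw [← mkWord_cons_eq, ← mkWord_cons_eq, h]
      have hd2 : 1 ≤ p.2 := hd p (by simp)
      have hd2' : 1 ≤ p'.2 := hd' p' (by simp)
      have hv : (mkWord M)[0]? = some false :=
        mkWord_get0 M (fun x hx => hc x (by simpa using hx))
      have hv' : (mkWord M')[0]? = some false :=
        mkWord_get0 M' (fun x hx => hc' x (by simpa using hx))
      have h1 : p.1 = p'.1 := by
        rcases lt_trichotomy p.1 p'.1 with hlt | heq | hgt
        · exfalso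
          have := hget p.1
          rw [block_get?, block_get?, if_neg (by omega), if_pos (by omega), if_pos hlt] at this
          simp at this
        · exact heq
        · exfalso
          have := hget p'.1
          rw [block_get?, block_get?, if_pos hgt, if_neg (by omega), if_pos (by omega)] at this
          simp at this
      have h2 : p.2 = p'.2 := by
        rcases lt_trichotomy p.2 p'.2 with hlt | heq | hgt
        · exfalso
          have := hget (p.1 + p.2)
          rw [block_get?, block_get?, if_neg (by omega), if_neg (by omega),
            if_neg (by omega), if_pos (by omega), show p.1 + p.2 - (p.1 + p.2) = 0 from by omega,
            hv] at this
          simp at this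
        · exact heq
        · exfalso
          have := hget (p'.1 + p'.2)
          rw [block_get?, block_get?, if_neg (by omega), if_pos (by omega),
            if_neg (by omega), if_neg (by omega),
            show p'.1 + p'.2 - (p'.1 + p'.2) = 0 from by omega, hv'] at this
          simp at this
      have h3 : mkWord M = mkWord M' := by
        have hh : List.replicate p.1 false ++ List.replicate p.2 true ++ mkWord M
            = List.replicate p.1 false ++ List.replicate p.2 true ++ mkWord M' := by
          rw [← mkWord_cons_eq, h, mkWord_cons_eq, h1, h2]
        rw [List.append_assoc, List.append_assoc] at hh
        exact List.append_cancel_left (List.append_cancel_left hh)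
      have h4 : M = M' := ih M' (fun x hx => hd x (by simp [hx])) (fun x hx => hd' x (by simp [hx]))
        (fun x hx => hc x (List.mem_of_mem_tail (by simpa using hx)))
        (fun x hx => hc' x (List.mem_of_mem_tail (by simpa using hx))) h3
      rw [h4, show p = p' from Prod.ext_iff.2 ⟨h1, h2⟩]

/-- the block list of a box word. -/
def boxLst (k : ℕ) (δ i : ℕ → ℕ) : List (ℕ × ℕ) :=
  (δ 1 - i 1, i 1) :: (List.range (k - 1)).map (fun t => (δ (t + 2) - i (t + 2) + 1, i (t + 2)))

lemma boxLst_length {k : ℕ} {δ i : ℕ → ℕ} (hk : 1 ≤ k) : (boxLst k δ i).length = k := by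
  simp [boxLst]
  omega

lemma boxLst_get?_zero {k : ℕ} {δ i : ℕ → ℕ} :
    (boxLst k δ i)[0]? = some (δ 1 - i 1, i 1) := rfl

lemma boxLst_get?_succ {k : ℕ} {δ i : ℕ → ℕ} (t : ℕ) (ht : t < k - 1) :
    (boxLst k δ i)[t + 1]? = some (δ (t + 2) - i (t + 2) + 1, i (t + 2)) := by
  rw [boxLst, List.getElem?_cons_succ, List.getElem?_map, List.getElem?_range ht]
  rfl

lemma mkWord_flatten : ∀ (L : List (ℕ × ℕ)),
    mkWord L = (L.map (fun p => blockW p.1 p.2)).flatten ++ [false] := by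
  rintro (_ | ⟨p, L⟩)
  · rfl
  · show blockW p.1 p.2 ++ mkWord L = _
    rw [mkWord_flatten L]
    simp [List.append_assoc]

lemma boxWord_eq_mkWord (k : ℕ) (δ i : ℕ → ℕ) :
    boxWord k δ i = mkWord (boxLst k δ i) := by
  have hmap : List.map (fun p => blockW p.1 p.2)
      ((List.range (k - 1)).map (fun t => (δ (t + 2) - i (t + 2) + 1, i (t + 2))))
      = (List.range (k - 1)).map (fun t =>
        List.replicate (δ (t + 2) - i (t + 2) + 1) false ++ List.replicate (i (t + 2)) true) := by
    rw [List.map_map]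
    rfl
  rw [mkWord_flatten, boxLst, List.map_cons, hmap, List.flatten_cons, boxWord, blockW]

lemma boxWord_congr {k : ℕ} {δ i i' : ℕ → ℕ} (hk : 1 ≤ k)
    (h : ∀ j, 1 ≤ j → j ≤ k → i j = i' j) : boxWord k δ i = boxWord k δ i' := by
  have hmap : (List.range (k - 1)).map (fun t =>
        List.replicate (δ (t + 2) - i (t + 2) + 1) false ++ List.replicate (i (t + 2)) true)
      = (List.range (k - 1)).map (fun t =>
        List.replicate (δ (t + 2) - i' (t + 2) + 1) false ++ List.replicate (i' (t + 2)) true) := by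
    apply List.map_congr_left
    intro t ht
    rw [List.mem_range] at ht
    rw [h (t + 2) (by omega) (by omega)]
  rw [boxWord, boxWord, h 1 le_rfl hk, hmap]

lemma boxLst_d {k : ℕ} {δ i : ℕ → ℕ} (hk : 1 ≤ k)
    (hbox : ∀ j, 1 ≤ j → j ≤ k → 1 ≤ i j ∧ i j ≤ δ j) :
    ∀ p ∈ boxLst k δ i, 1 ≤ p.2 := by
  intro p hp
  rcases List.mem_cons.1 hp with rfl | hp
  · exact (hbox 1 le_rfl hk).1
  · rcases List.mem_map.1 hp with ⟨t, ht, rfl⟩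
    rw [List.mem_range] at ht
    exact (hbox (t + 2) (by omega) (by omega)).1

lemma boxLst_c {k : ℕ} {δ i : ℕ → ℕ} : ∀ p ∈ (boxLst k δ i).tail, 1 ≤ p.1 := by
  intro p hp
  simp only [boxLst, List.tail_cons] at hp
  rcases List.mem_map.1 hp with ⟨t, ht, rfl⟩
  simp

end BoxWords

section QLists

/-- the target list `[q k, q (k-1), …, q 1]`. -/
def qList (k : ℕ) (q : ℕ → ℕ) : List ℕ := (List.range k).map (fun t => q (k - t))

lemma qList_length {k : ℕ} {q : ℕ → ℕ} : (qList k q).length = k := by simp [qList]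

lemma qList_get? {k : ℕ} {q : ℕ → ℕ} (t : ℕ) (ht : t < k) :
    (qList k q)[t]? = some (q (k - t)) := by
  rw [qList, List.getElem?_map, List.getElem?_range ht]
  rfl

lemma q_strict {k : ℕ} {q : ℕ → ℕ} (hgap : ∀ j, 1 ≤ j → j < k → q (j + 1) + 2 ≤ q j) :
    ∀ d a, 1 ≤ a → a + d + 1 ≤ k → q (a + d + 1) < q a := by
  intro d
  induction d with
  | zero =>
    intro a h1 h2
    have := hgap a h1 (by omega)
    simp only [Nat.add_zero]
    omega
  | succ d ih =>
    intro a h1 h2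
    have h3 := ih a h1 (by omega)
    have h4 := hgap (a + d + 1) (by omega) (by omega)
    have h5 : a + (d + 1) + 1 = (a + d + 1) + 1 := by omega
    rw [h5]
    omega

lemma q_lt {k : ℕ} {q : ℕ → ℕ} (hgap : ∀ j, 1 ≤ j → j < k → q (j + 1) + 2 ≤ q j)
    {a b : ℕ} (ha : 1 ≤ a) (hab : a < b) (hbk : b ≤ k) : q b < q a := by
  have := q_strict hgap (b - a - 1) a ha (by omega)
  rwa [show a + (b - a - 1) + 1 = b from by omega] at this

lemma qList_sorted {k : ℕ} {q : ℕ → ℕ}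
    (hgap : ∀ j, 1 ≤ j → j < k → q (j + 1) + 2 ≤ q j) :
    (qList k q).Pairwise (· < ·) := by
  rw [qList, List.pairwise_map]
  refine List.Pairwise.imp_of_mem ?_ ((List.pairwise_lt_range (n := k)))
  intro a b ha hb hab
  rw [List.mem_range] at ha hb
  exact q_lt hgap (a := k - b) (b := k - a) (by omega) (by omega) (by omega)

lemma qList_mem {k : ℕ} {q : ℕ → ℕ} (x : ℕ) :
    x ∈ qList k q ↔ ∃ j, 1 ≤ j ∧ j ≤ k ∧ x = q j := by
  simp only [qList, List.mem_map, List.mem_range]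
  constructor
  · rintro ⟨t, ht, rfl⟩
    exact ⟨k - t, by omega, by omega, rfl⟩
  · rintro ⟨j, h1, h2, rfl⟩
    exact ⟨k - j, by omega, by rw [show k - (k - j) = j from by omega]⟩

end QLists
section BoxMain

variable {k : ℕ} {q δ : ℕ → ℕ}

lemma sumsW_boxLst (hk : 1 ≤ k)
    (hgap : ∀ j, 1 ≤ j → j < k → q (j + 1) + 2 ≤ q j)
    (hδ1 : δ 1 = q k)
    (hδ : ∀ j, 2 ≤ j → j ≤ k → δ j = q (k - j + 1) - q (k - j + 2) - 1)
    {i : ℕ → ℕ} (hbox : ∀ j, 1 ≤ j → j ≤ k → 1 ≤ i j ∧ i j ≤ δ j) :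
    sumsW (boxLst k δ i) = qList k q := by
  have claim : ∀ t, t < k → (sumsW (boxLst k δ i))[t]? = some (q (k - t)) := by
    intro t
    induction t with
    | zero =>
      intro _
      rw [show boxLst k δ i = (δ 1 - i 1, i 1) ::
        (List.range (k - 1)).map (fun t => (δ (t + 2) - i (t + 2) + 1, i (t + 2))) from rfl,
        sumsW_get?_head]
      have hb := hbox 1 le_rfl hk
      have he : δ 1 - i 1 + i 1 = q (k - 0) := by
        rw [show k - 0 = k from rfl, ← hδ1]
        omega
      rw [he]
    | succ t iht =>
      intro htk
      have hprev := iht (by omega)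
      have hlen : (sumsW (boxLst k δ i)).length = k := by
        rw [sumsW_length, boxLst_length hk]
      obtain ⟨y, hy⟩ : ∃ y, (sumsW (boxLst k δ i))[t + 1]? = some y := by
        rcases hh : (sumsW (boxLst k δ i))[t + 1]? with _ | y
        · rw [List.getElem?_eq_none_iff] at hh
          omega
        · exact ⟨y, rfl⟩
      have hblock := boxLst_get?_succ (k := k) (δ := δ) (i := i) t (by omega)
      have hrec := sumsW_rec (boxLst k δ i) t _ _ _ hblock hprev hy
      rw [hy]
      have hb := hbox (t + 2) (by omega) (by omega)
      have hδt := hδ (t + 2) (by omega) (by omega)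
      rw [show k - (t + 2) + 1 = k - t - 1 from by omega,
        show k - (t + 2) + 2 = k - t from by omega] at hδt
      have hgap2 := hgap (k - t - 1) (by omega) (by omega)
      rw [show k - t - 1 + 1 = k - t from by omega] at hgap2
      rw [show k - (t + 1) = k - t - 1 from by omega]
      congr 1
      simp only at hrec
      omega
  apply List.ext_getElem?
  intro n
  by_cases hn : n < k
  · rw [claim n hn, qList_get? n hn]
  · rw [List.getElem?_eq_none_iff.2, List.getElem?_eq_none_iff.2]
    · rw [qList_length]; omega
    · rw [sumsW_length, boxLst_length hk]; omega

lemma reconstruct (hk : 1 ≤ k)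
    (hgap : ∀ j, 1 ≤ j → j < k → q (j + 1) + 2 ≤ q j)
    (hδ1 : δ 1 = q k)
    (hδ : ∀ j, 2 ≤ j → j ≤ k → δ j = q (k - j + 1) - q (k - j + 2) - 1)
    (L : List (ℕ × ℕ)) (hd : ∀ p ∈ L, 1 ≤ p.2) (hc : ∀ p ∈ L.tail, 1 ≤ p.1)
    (hsum : sumsW L = qList k q) :
    ∃ i : ℕ → ℕ, (∀ j, 1 ≤ j → j ≤ k → 1 ≤ i j ∧ i j ≤ δ j) ∧ L = boxLst k δ i := by
  classical
  have hlenL : L.length = k := by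
    rw [← sumsW_length L, hsum, qList_length]
  set i : ℕ → ℕ :=
    fun j => if 1 ≤ j ∧ j ≤ k then ((L[j - 1]?).map Prod.snd).getD 0 else 0 with hidef
  have hget : ∀ t, t < k → ∃ p, L[t]? = some p := by
    intro t ht
    rcases hh : L[t]? with _ | p
    · rw [List.getElem?_eq_none_iff] at hh; omega
    · exact ⟨p, rfl⟩
  have hsums_get : ∀ t, t < k → (sumsW L)[t]? = some (q (k - t)) := by
    intro t ht
    rw [hsum, qList_get? t ht]
  have hhead : ∀ p, L[0]? = some p → p.1 + p.2 = q k := by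
    intro p hp
    have h0 := hsums_get 0 (by omega)
    rw [show k - 0 = k from rfl] at h0
    cases L with
    | nil => simp at hp
    | cons p0 M =>
      rw [sumsW_get?_head] at h0
      simp only [List.getElem?_cons_zero] at hp
      cases hp
      simpa using h0
  have hstep : ∀ t p, t + 1 < k → L[t + 1]? = some p →
      q (k - t - 1) = q (k - t) + (p.1 + p.2) := by
    intro t p ht hp
    have hx := hsums_get t (by omega)
    have hy := hsums_get (t + 1) ht
    have := sumsW_rec L t p _ _ hp hx hy
    rw [show k - (t + 1) = k - t - 1 from by omega] at this
    exact this
  have htail : ∀ t p, t + 1 < k → L[t + 1]? = some p → 1 ≤ p.1 := by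
    intro t p ht hp
    cases L with
    | nil => simp at hp
    | cons p0 M =>
      rw [List.getElem?_cons_succ] at hp
      exact hc p (by simpa using List.mem_of_getElem? hp)
  have hival : ∀ j, 1 ≤ j → j ≤ k → ∀ p, L[j - 1]? = some p → i j = p.2 := by
    intro j h1 h2 p hp
    show (if 1 ≤ j ∧ j ≤ k then ((L[j - 1]?).map Prod.snd).getD 0 else 0) = p.2
    rw [if_pos ⟨h1, h2⟩, hp]
    rfl
  refine ⟨i, ?_, ?_⟩
  · intro j h1 h2
    obtain ⟨p, hp⟩ := hget (j - 1) (by omega)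
    have hij := hival j h1 h2 p hp
    have hd2 : 1 ≤ p.2 := hd p (List.mem_of_getElem? hp)
    by_cases hj1 : j = 1
    · subst hj1
      have hh := hhead p hp
      rw [hij, hδ1]
      omega
    · have h2j : 2 ≤ j := by omega
      have hc1 : 1 ≤ p.1 := htail (j - 2) p (by omega)
        (by rwa [show j - 2 + 1 = j - 1 from by omega])
      have hst := hstep (j - 2) p (by omega)
        (by rwa [show j - 2 + 1 = j - 1 from by omega])
      have hδj := hδ j h2j h2
      rw [show k - j + 1 = k - (j - 2) - 1 from by omega,
        show k - j + 2 = k - (j - 2) from by omega] at hδj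
      rw [hij]
      omega
  · apply List.ext_getElem?
    intro n
    by_cases hn : n < k
    · obtain ⟨p, hp⟩ := hget n hn
      rw [hp]
      cases n with
      | zero =>
        rw [boxLst_get?_zero]
        have hh := hhead p hp
        have hij := hival 1 le_rfl hk p hp
        have hd2 : 1 ≤ p.2 := hd p (List.mem_of_getElem? hp)
        congr 1
        rw [Prod.ext_iff]
        constructor
        · simp only
          rw [hij, hδ1]
          omega
        · simp only
          rw [hij]
      | succ t =>
        rw [boxLst_get?_succ t (by omega)]
        have hij := hival (t + 2) (by omega) (by omega) p
          (by rwa [show t + 2 - 1 = t + 1 from rfl])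
        have hd2 : 1 ≤ p.2 := hd p (List.mem_of_getElem? hp)
        have hc1 : 1 ≤ p.1 := htail t p (by omega) hp
        have hst := hstep t p (by omega) hp
        have hδj := hδ (t + 2) (by omega) (by omega)
        rw [show k - (t + 2) + 1 = k - t - 1 from by omega,
          show k - (t + 2) + 2 = k - t from by omega] at hδj
        congr 1
        rw [Prod.ext_iff]
        constructor
        · simp only
          rw [hij]
          omega
        · simp only
          rw [hij]
    · rw [List.getElem?_eq_none_iff.2 (by omega), List.getElem?_eq_none_iff.2]
      rw [boxLst_length hk]
      omega

end BoxMain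
section FinalHelpers

lemma sum_list_range (g : ℕ → ℕ) : ∀ m, ((List.range m).map g).sum = ∑ t ∈ Finset.range m, g t := by
  intro m
  induction m with
  | zero => simp
  | succ m ih =>
    rw [List.range_succ, List.map_append, List.sum_append, Finset.sum_range_succ, ih]
    simp

lemma sum_Icc_one (i : ℕ → ℕ) : ∀ m, ∑ j ∈ Finset.Icc 1 m, i j = ∑ t ∈ Finset.range m, i (t + 1) := by
  intro m
  induction m with
  | zero => simp
  | succ m ih =>
    rw [Finset.sum_Icc_succ_top (by omega), ih, Finset.sum_range_succ]

end FinalHelpers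

theorem stmt15' (k : ℕ) (hk : 1 ≤ k) (q : ℕ → ℕ)
    (hq1 : 1 ≤ q k) (hgap : ∀ j, 1 ≤ j → j < k → q (j + 1) + 2 ≤ q j)
    (δ : ℕ → ℕ) (hδ1 : δ 1 = q k)
    (hδ : ∀ j, 2 ≤ j → j ≤ k → δ j = q (k - j + 1) - q (k - j + 2) - 1) :
    (∀ f : ℕ → ℕ, IsFreq f →
      (DesSet f = {x | ∃ j, 1 ≤ j ∧ j ≤ k ∧ x = q j} ↔
        ∃ i : ℕ → ℕ, (∀ j, 1 ≤ j → j ≤ k → 1 ≤ i j ∧ i j ≤ δ j) ∧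
          burgeCode f = boxWord k δ i)) ∧
    (∀ i : ℕ → ℕ, (∀ j, 1 ≤ j → j ≤ k → 1 ≤ i j ∧ i j ≤ δ j) →
      ∀ f : ℕ → ℕ, IsFreq f → burgeCode f = boxWord k δ i →
        flen f = ∑ j ∈ Finset.Icc 1 k, i j) ∧
    {f : ℕ → ℕ | IsFreq f ∧ DesSet f = {x | ∃ j, 1 ≤ j ∧ j ≤ k ∧ x = q j}}.ncard
      = ∏ j ∈ Finset.Icc 1 k, δ j := by
  classical
  set Qset : Set ℕ := {x | ∃ j, 1 ≤ j ∧ j ≤ k ∧ x = q j} with hQdef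
  have hpart1 : ∀ f : ℕ → ℕ, IsFreq f →
      (DesSet f = Qset ↔
        ∃ i : ℕ → ℕ, (∀ j, 1 ≤ j → j ≤ k → 1 ≤ i j ∧ i j ≤ δ j) ∧
          burgeCode f = boxWord k δ i) := by
    intro f hf
    constructor
    · intro hDes
      obtain ⟨L, hw, hd, hc⟩ := good_decomp (good_burgeCode hf)
      have hdesc : {x | x ∈ sumsW L} = Qset := by
        rw [← descSet_mkWord L hd hc, ← hw]
        exact hDes
      have hmem : ∀ x, x ∈ sumsW L ↔ x ∈ qList k q := by
        intro x
        rw [qList_mem x]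
        have := Set.ext_iff.1 hdesc x
        simpa [hQdef] using this
      have hsum := pairwise_eq_of_mem_iff _ _ (sumsW_sorted L hd) (qList_sorted hgap) hmem
      obtain ⟨i, hbox, hLi⟩ := reconstruct hk hgap hδ1 hδ L hd hc hsum
      exact ⟨i, hbox, by rw [hw, hLi, ← boxWord_eq_mkWord]⟩
    · rintro ⟨i, hbox, hcode⟩
      have h0 : DesSet f = descSet (boxWord k δ i) := by
        rw [show DesSet f = descSet (burgeCode f) from rfl, hcode]
      rw [h0, boxWord_eq_mkWord, descSet_mkWord _ (boxLst_d hk hbox) boxLst_c,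
        sumsW_boxLst hk hgap hδ1 hδ hbox]
      ext x
      exact qList_mem x
  have hpart2 : ∀ i : ℕ → ℕ, (∀ j, 1 ≤ j → j ≤ k → 1 ≤ i j ∧ i j ≤ δ j) →
      ∀ f : ℕ → ℕ, IsFreq f → burgeCode f = boxWord k δ i →
        flen f = ∑ j ∈ Finset.Icc 1 k, i j := by
    intro i hbox f hf hcode
    have h1 : flen f = (boxWord k δ i).count true := by
      rw [flen_count hf, hcode]
    have h2 : ((boxLst k δ i).map Prod.snd) = i 1 :: (List.range (k - 1)).map (fun t => i (t + 2)) := by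
      simp [boxLst, List.map_map, Function.comp]
    rw [h1, boxWord_eq_mkWord, count_true_mkWord, h2, List.sum_cons,
      sum_list_range (fun t => i (t + 2)) (k - 1)]
    rw [sum_Icc_one i k]
    rw [show k = (k - 1) + 1 from by omega, Finset.sum_range_succ' (fun t => i (t + 1)) (k - 1)]
    simp only [Nat.add_sub_cancel]
    have hcg : ∑ t ∈ Finset.range (k - 1), i (t + 1 + 1) = ∑ t ∈ Finset.range (k - 1), i (t + 2) :=
      Finset.sum_congr rfl (fun t _ => by norm_num)
    have hz : i (0 + 1) = i 1 := by norm_num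
    omega
  refine ⟨hpart1, hpart2, ?_⟩
  -- Part 3 : counting
  set B : Set (ℕ → ℕ) := {i | (∀ j, 1 ≤ j → j ≤ k → 1 ≤ i j ∧ i j ≤ δ j) ∧
    ∀ j, ¬(1 ≤ j ∧ j ≤ k) → i j = 0} with hBdef
  set Φ : (ℕ → ℕ) → (ℕ → ℕ) := fun i => decodeF (boxWord k δ i) with hΦdef
  have hGoodBox : ∀ i : ℕ → ℕ, (∀ j, 1 ≤ j → j ≤ k → 1 ≤ i j ∧ i j ≤ δ j) →
      GoodW (boxWord k δ i) := by
    intro i hbox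
    rw [boxWord_eq_mkWord]
    exact goodW_mkWord _ (boxLst_d hk hbox) boxLst_c
  have hcodeΦ : ∀ i : ℕ → ℕ, (∀ j, 1 ≤ j → j ≤ k → 1 ≤ i j ∧ i j ≤ δ j) →
      burgeCode (Φ i) = boxWord k δ i := by
    intro i hbox
    exact burgeCode_decode (hGoodBox i hbox)
  have hSet : {f : ℕ → ℕ | IsFreq f ∧ DesSet f = Qset} = Φ '' B := by
    ext f
    simp only [Set.mem_setOf_eq, Set.mem_image]
    constructor
    · rintro ⟨hf, hDes⟩
      obtain ⟨i, hbox, hcode⟩ := (hpart1 f hf).1 hDes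
      set i' : ℕ → ℕ := fun j => if 1 ≤ j ∧ j ≤ k then i j else 0 with hi'def
      have hbox' : ∀ j, 1 ≤ j → j ≤ k → 1 ≤ i' j ∧ i' j ≤ δ j := by
        intro j h1 h2
        have : i' j = i j := by rw [hi'def]; simp only [if_pos (⟨h1, h2⟩ : 1 ≤ j ∧ j ≤ k)]
        rw [this]
        exact hbox j h1 h2
      refine ⟨i', ⟨hbox', ?_⟩, ?_⟩
      · intro j hj
        rw [hi'def]
        simp only [if_neg hj]
      · have hbw : boxWord k δ i = boxWord k δ i' := by
          apply boxWord_congr hk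
          intro j h1 h2
          rw [hi'def]
          simp only [if_pos (⟨h1, h2⟩ : 1 ≤ j ∧ j ≤ k)]
        rw [hΦdef]
        simp only []
        rw [← hbw, ← hcode]
        exact decode_burgeCode hf
    · rintro ⟨i, ⟨hbox, _⟩, rfl⟩
      have hf : IsFreq (Φ i) := IsFreq_decodeF _
      exact ⟨hf, (hpart1 _ hf).2 ⟨i, hbox, hcodeΦ i hbox⟩⟩
  have hInj : Set.InjOn Φ B := by
    intro i hi i' hi' heq
    have h1 : boxWord k δ i = boxWord k δ i' := by
      rw [← hcodeΦ i hi.1, ← hcodeΦ i' hi'.1, heq]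
    have h2 : boxLst k δ i = boxLst k δ i' := by
      apply mkWord_inj _ _ (boxLst_d hk hi.1) (boxLst_d hk hi'.1) boxLst_c boxLst_c
      rw [← boxWord_eq_mkWord, ← boxWord_eq_mkWord, h1]
    funext j
    by_cases hj : 1 ≤ j ∧ j ≤ k
    · by_cases hj1 : j = 1
      · subst hj1
        have hh := congrArg List.head? h2
        simp only [boxLst, List.head?_cons, Option.some.injEq, Prod.mk.injEq] at hh
        exact hh.2
      · have hlt : j - 2 < k - 1 := by omega
        have e1 := boxLst_get?_succ (k := k) (δ := δ) (i := i) (j - 2) hlt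
        have e2 := boxLst_get?_succ (k := k) (δ := δ) (i := i') (j - 2) hlt
        rw [show j - 2 + 2 = j from by omega] at e1 e2
        have hgq := congrArg (fun L => L[j - 2 + 1]?) h2
        rw [e1, e2] at hgq
        injection hgq with hgq2
        exact congrArg Prod.snd hgq2
    · rw [hi.2 j hj, hi'.2 j hj]
  rw [hSet, Set.ncard_image_of_injOn hInj]
  -- B is the coercion of a finite pi set
  set emb : (∀ j ∈ Finset.Icc 1 k, ℕ) → (ℕ → ℕ) :=
    fun g => fun j => if h : j ∈ Finset.Icc 1 k then g j h else 0 with hembdef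
  have hBeq : B = ↑(((Finset.Icc 1 k).pi (fun j => Finset.Icc 1 (δ j))).image emb) := by
    ext i
    simp only [Finset.coe_image, Set.mem_image, Finset.mem_coe, Finset.mem_pi]
    constructor
    · rintro ⟨hbox, hout⟩
      refine ⟨fun j _ => i j, ?_, ?_⟩
      · intro j hj
        rw [Finset.mem_Icc] at hj ⊢
        exact ⟨(hbox j hj.1 hj.2).1, (hbox j hj.1 hj.2).2⟩
      · funext j
        rw [hembdef]
        by_cases hj : j ∈ Finset.Icc 1 k
        · simp only [dif_pos hj]
        · simp only [dif_neg hj]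
          rw [Finset.mem_Icc] at hj
          exact (hout j (by omega)).symm
    · rintro ⟨g, hg, rfl⟩
      constructor
      · intro j h1 h2
        have hj : j ∈ Finset.Icc 1 k := Finset.mem_Icc.2 ⟨h1, h2⟩
        have := hg j hj
        rw [Finset.mem_Icc] at this
        rw [hembdef]
        simp only [dif_pos hj]
        exact this
      · intro j hj
        have hj' : j ∉ Finset.Icc 1 k := by
          rw [Finset.mem_Icc]; omega
        rw [hembdef]
        simp only [dif_neg hj']
  rw [hBeq, Set.ncard_coe_finset]
  rw [Finset.card_image_of_injOn]
  · rw [Finset.card_pi]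
    apply Finset.prod_congr rfl
    intro j _
    rw [Nat.card_Icc]
    omega
  · intro g hg g' hg' heq
    funext j hj
    have hcf := congrFun heq j
    rw [hembdef] at hcf
    simp only [dif_pos hj] at hcf
    exact hcf
/-- box parametrization: for super-distinct `Q = (q₁ > ⋯ > q_k)`
with `δ₁ = q_k`, `δ_i = q_{k-i+1} - q_{k-i+2} - 1`, the partitions with
`Des(P) = Q` are exactly those whose Burge code is a box word with
`(i₁,…,i_k) ∈ [1,δ₁] × ⋯ × [1,δ_k]`; such a partition has `i₁ + ⋯ + i_k`
parts, and `|Des⁻¹(Q)| = δ₁⋯δ_k`. -/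
theorem stmt15 (k : ℕ) (hk : 1 ≤ k) (q : ℕ → ℕ)
    (hq1 : 1 ≤ q k) (hgap : ∀ j, 1 ≤ j → j < k → q (j + 1) + 2 ≤ q j)
    (δ : ℕ → ℕ) (hδ1 : δ 1 = q k)
    (hδ : ∀ j, 2 ≤ j → j ≤ k → δ j = q (k - j + 1) - q (k - j + 2) - 1) :
    (∀ f : ℕ → ℕ, IsFreq f →
      (DesSet f = {x | ∃ j, 1 ≤ j ∧ j ≤ k ∧ x = q j} ↔
        ∃ i : ℕ → ℕ, (∀ j, 1 ≤ j → j ≤ k → 1 ≤ i j ∧ i j ≤ δ j) ∧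
          burgeCode f = boxWord k δ i)) ∧
    (∀ i : ℕ → ℕ, (∀ j, 1 ≤ j → j ≤ k → 1 ≤ i j ∧ i j ≤ δ j) →
      ∀ f : ℕ → ℕ, IsFreq f → burgeCode f = boxWord k δ i →
        flen f = ∑ j ∈ Finset.Icc 1 k, i j) ∧
    {f : ℕ → ℕ | IsFreq f ∧ DesSet f = {x | ∃ j, 1 ≤ j ∧ j ≤ k ∧ x = q j}}.ncard
      = ∏ j ∈ Finset.Icc 1 k, δ j := by
  exact stmt15' k hk q hq1 hgap δ hδ1 hδ
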